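/- arXiv:2211.01699 — 2 statements merged into one kernel-verified Lean document; each statement's English description precedes it below -/
import Mathlib

section
/- Let G = (V,E) be a finite non-bipartite simple graph with a proper 3-coloring with color classes V₁, V₂, V₃. Then for each i ∈ {1,2,3} the contraction G/V_i is non-bipartite, and writing 2ρ_i−1 for its odd girth, the fractional chromatic number of G satisfies χ^f(G) ≤ 2 + min_{i∈{1,2,3}} 1/(ρ_i − 1). Moreover, equality holds if one of the color classes consists of a single vertex. -/
open Finset

/-- `C` is a vertex cover of `G`. -/
def IsVC {V : Type*} (G : SimpleGraph V) (C : Finset V) : Prop :=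
  ∀ ⦃u v : V⦄, G.Adj u v → u ∈ C ∨ v ∈ C

/-- `OPT G w` : minimum weight of a vertex cover of `G`. -/
noncomputable def OPT {V : Type*} [Fintype V] (G : SimpleGraph V) (w : V → ℝ) : ℝ :=
  sInf {t : ℝ | ∃ C : Finset V, IsVC G C ∧ t = ∑ v ∈ C, w v}

/-- `LPval G w` : optimal value of the standard vertex cover LP relaxation. -/
noncomputable def LPval {V : Type*} [Fintype V] (G : SimpleGraph V) (w : V → ℝ) : ℝ :=
  sInf {t : ℝ | ∃ x : V → ℝ, (∀ v, 0 ≤ x v) ∧ (∀ ⦃u v : V⦄, G.Adj u v → 1 ≤ x u + x v) ∧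
    t = ∑ v, w v * x v}

/-- The graph `G ∖ S` (vertices of `S` kept as isolated vertices). -/
def Gdel {V : Type*} (G : SimpleGraph V) (S : Set V) : SimpleGraph V :=
  SimpleGraph.fromRel (fun u v => G.Adj u v ∧ u ∉ S ∧ v ∉ S)

open scoped Classical in
/-- Sum of `y` over the set of edges described by `P`. -/
noncomputable def ysum {V : Type*} [Fintype V] [DecidableEq V]
    (y : Sym2 V → ℝ) (P : Sym2 V → Prop) : ℝ :=
  ∑ e : Sym2 V, if P e then y e else 0

/-- `y` is a dual certificate for `w` : a feasible dual solution with `y(δ(v)) = w v`. -/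
def IsDualCert {V : Type*} [Fintype V] [DecidableEq V] (G : SimpleGraph V)
    (w : V → ℝ) (y : Sym2 V → ℝ) : Prop :=
  (∀ e, 0 ≤ y e) ∧ (∀ e, e ∉ G.edgeSet → y e = 0) ∧
    ∀ v : V, ysum y (fun e => e ∈ G.edgeSet ∧ v ∈ e) = w v

/-- Membership in the polytope `Q^W`. -/
def memQW {V : Type*} [Fintype V] [DecidableEq V] (G : SimpleGraph V) (w : V → ℝ) : Prop :=
  (∀ v, 0 ≤ w v) ∧ (∑ v, w v) = 2 ∧ ∃ y : Sym2 V → ℝ, IsDualCert G w y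

/-- `G` has odd girth `n` : it contains an odd cycle of length `n` and no shorter one. -/
def HasOddGirth {V : Type*} (G : SimpleGraph V) (n : ℕ) : Prop :=
  Odd n ∧ (∃ (v : V) (c : G.Walk v v), c.IsCycle ∧ c.length = n) ∧
    ∀ (v : V) (c : G.Walk v v), c.IsCycle → Odd c.length → n ≤ c.length

/-- The contraction `G / S` of the vertex set `S` to a single new vertex `none`. -/
def contract {V : Type*} (G : SimpleGraph V) (S : Set V) :
    SimpleGraph (Option {v : V // v ∉ S}) :=
  SimpleGraph.fromRel (fun x y =>
    match x, y with
    | some u, some v => G.Adj u.1 v.1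
    | some u, none => ∃ s ∈ S, G.Adj u.1 s
    | none, _ => False)

/-- `I` is an independent set of `G`. -/
def IsIndep {V : Type*} (G : SimpleGraph V) (I : Finset V) : Prop :=
  ∀ ⦃u⦄, u ∈ I → ∀ ⦃v⦄, v ∈ I → ¬ G.Adj u v

/-- The fractional chromatic number of `G`. -/
noncomputable def fracChrom {V : Type*} [Fintype V] [DecidableEq V] (G : SimpleGraph V) : ℝ :=
  sInf {t : ℝ | ∃ y : Finset V → ℝ, (∀ I, 0 ≤ y I) ∧ (∀ I, ¬ IsIndep G I → y I = 0) ∧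
    (∀ v : V, 1 ≤ ∑ I : Finset V, if v ∈ I then y I else 0) ∧ t = ∑ I : Finset V, y I}

section AuxLemmas

open SimpleGraph


lemma path_loop_edge {W : Type*} {H : SimpleGraph W} {u v : W} {p : H.Walk u v}
    (hp : p.IsPath) (he : s(v, u) ∈ p.edges) : p.length = 1 := by
  cases p with
  | nil => simp at he
  | @cons _ b _ h q =>
    rw [SimpleGraph.Walk.edges_cons, List.mem_cons] at he
    rcases he with he | he
    · rw [Sym2.eq_iff] at he
      rcases he with ⟨rfl, rfl⟩ | ⟨rfl, -⟩
      · have : q = SimpleGraph.Walk.nil := (q.isPath_iff_eq_nil).mp hp.of_cons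
        subst this; simp
      · have : q = SimpleGraph.Walk.nil := (q.isPath_iff_eq_nil).mp hp.of_cons
        subst this; simp
    · exact absurd (q.snd_mem_support_of_mem_edges he)
        ((SimpleGraph.Walk.cons_isPath_iff h q).mp hp).2

lemma closed_walk_split {W : Type*} {H : SimpleGraph W} {y x : W} (e₂ : H.Walk y x)
    (hy : y ∈ e₂.support.tail) :
    ∃ (B₁ : H.Walk y y) (r : H.Walk y x), 1 ≤ B₁.length ∧ B₁.length + r.length = e₂.length := by
  classical
  cases e₂ with
  | nil => simp at hy
  | @cons _ z _ had f =>
    have hy' : y ∈ f.support := by simpa using hy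
    refine ⟨SimpleGraph.Walk.cons had (f.takeUntil y hy'), f.dropUntil y hy', by simp, ?_⟩
    have := congrArg SimpleGraph.Walk.length (f.take_spec hy')
    rw [SimpleGraph.Walk.length_append] at this
    simp only [SimpleGraph.Walk.length_cons]
    omega

lemma exists_odd_cycle {W : Type*} {H : SimpleGraph W} {v : W} (w : H.Walk v v)
    (hodd : Odd w.length) :
    ∃ (x : W) (c : H.Walk x x), c.IsCycle ∧ Odd c.length ∧ c.length ≤ w.length := by
  classical
  let P : ℕ → Prop := fun n => ∃ (x : W) (c : H.Walk x x), Odd c.length ∧ c.length = n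
  have hP : ∃ n, P n := ⟨w.length, v, w, hodd, rfl⟩
  obtain ⟨x, c, hodd', hlen⟩ := Nat.find_spec hP
  have hmin : ∀ k, k < Nat.find hP → ¬ P k := fun k hk => Nat.find_min hP hk
  have hle : Nat.find hP ≤ w.length := Nat.find_le ⟨v, w, hodd, rfl⟩
  refine ⟨x, c, ?_, hodd', by omega⟩
  cases c with
  | nil => simp [Nat.odd_iff] at hodd'
  | @cons _ z _ hadj e =>
    have hcons_len : (SimpleGraph.Walk.cons hadj e).length = e.length + 1 := by simp
    have hnodup : e.support.Nodup := by
      by_contra hdup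
      rw [List.nodup_iff_count_le_one] at hdup
      push_neg at hdup
      obtain ⟨a, ha⟩ := hdup
      have ha2 : 2 ≤ e.support.count a := by omega
      have hamem : a ∈ e.support := by
        rw [← List.count_pos_iff]; omega
      have hcount1 : (e.takeUntil a hamem).support.count a = 1 :=
        e.count_support_takeUntil_eq_one hamem
      have hsupp : e.support = (e.takeUntil a hamem).support
          ++ (e.dropUntil a hamem).support.tail := by
        conv_lhs => rw [← e.take_spec hamem]
        rw [SimpleGraph.Walk.support_append]
      have hc2 : 1 ≤ (e.dropUntil a hamem).support.tail.count a := by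
        have := congrArg (List.count a) hsupp
        rw [List.count_append] at this
        omega
      have hmem2 : a ∈ (e.dropUntil a hamem).support.tail := by
        rw [← List.count_pos_iff]; omega
      obtain ⟨B₁, r, hB₁, hsum⟩ := closed_walk_split (e.dropUntil a hamem) hmem2
      -- second closed walk at a
      have hlen_take : (e.takeUntil a hamem).length + (e.dropUntil a hamem).length = e.length := by
        have := congrArg SimpleGraph.Walk.length (e.take_spec hamem)
        rw [SimpleGraph.Walk.length_append] at this; omega
      set B₂ : H.Walk a a := r.append ((SimpleGraph.Walk.cons hadj (e.takeUntil a hamem))) with hB₂def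
      have hB₂ : B₂.length = r.length + (e.takeUntil a hamem).length + 1 := by
        rw [hB₂def, SimpleGraph.Walk.length_append]; simp; omega
      have htot : B₁.length + B₂.length = Nat.find hP := by
        rw [hB₂] at *; omega
      have hoddm : Odd (Nat.find hP) := hlen ▸ hodd'
      rw [Nat.odd_iff] at hoddm
      have : Odd B₁.length ∨ Odd B₂.length := by
        rw [Nat.odd_iff, Nat.odd_iff]; omega
      rcases this with hOB | hOB
      · exact hmin B₁.length (by omega) ⟨a, B₁, hOB, rfl⟩
      · have hB₂pos : 1 ≤ B₂.length := by omega
        exact hmin B₂.length (by omega) ⟨a, B₂, hOB, rfl⟩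
    have hpath : e.IsPath := (SimpleGraph.Walk.isPath_def e).mpr hnodup
    rw [SimpleGraph.Walk.cons_isCycle_iff]
    refine ⟨hpath, fun hedge => ?_⟩
    have h1 := path_loop_edge hpath hedge
    rw [Nat.odd_iff] at hodd'
    omega


lemma hom_to_odd_cycle {W : Type*} (H : SimpleGraph W) (v₀ : W) (σ : W → Bool) (t : ℕ)
    (ht : 1 ≤ t)
    (hσ : ∀ ⦃u w : W⦄, H.Adj u w → u ≠ v₀ → w ≠ v₀ → σ u ≠ σ w)
    (hgirth : ∀ c : H.Walk v₀ v₀, Odd c.length → 2 * t + 1 ≤ c.length) :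
    ∃ ψ : W → ZMod (2 * t + 1), ∀ ⦃u w : W⦄, H.Adj u w →
      ψ u - ψ w = 1 ∨ ψ w - ψ u = 1 := by
  classical
  let H' : SimpleGraph W :=
    { Adj := fun a b => H.Adj a b ∧ a ≠ v₀ ∧ b ≠ v₀
      symm := ⟨fun a b h => ⟨h.1.symm, h.2.2, h.2.1⟩⟩
      loopless := ⟨fun a h => H.loopless.irrefl a h.1⟩ }
  let c' : H'.Coloring Bool := SimpleGraph.Coloring.mk σ (fun {a b} h => hσ h.1 h.2.1 h.2.2)
  let ι : H' →g H := ⟨id, fun {a b} h => h.1⟩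
  let Sv : W → Set ℕ := fun u =>
    {n | ∃ s : W, H.Adj v₀ s ∧ σ s = false ∧ ∃ p : H'.Walk s u, p.length = n}
  let reach : W → Prop := fun u => (Sv u).Nonempty
  let dB : W → ℕ := fun u => sInf (Sv u)
  have hmem : ∀ {u}, reach u → dB u ∈ Sv u := fun h => Nat.sInf_mem h
  have hpar : ∀ {u : W} {n : ℕ}, n ∈ Sv u → (Odd n ↔ σ u = true) := by
    rintro u n ⟨s, hs, hsf, p, rfl⟩
    rw [SimpleGraph.Coloring.odd_length_iff_not_congr c' p]
    have hcs : c' s = σ s := rfl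
    have hcu : c' u = σ u := rfl
    rw [hcs, hcu, hsf]
    cases h : σ u <;> simp
  have hstep : ∀ {u w : W} {n : ℕ}, n ∈ Sv u → H'.Adj u w → n + 1 ∈ Sv w := by
    rintro u w n ⟨s, hs, hsf, p, rfl⟩ h
    exact ⟨s, hs, hsf, p.concat h, by simp [SimpleGraph.Walk.length_concat]⟩
  have hreach_step : ∀ {u w : W}, reach u → H'.Adj u w → reach w := by
    rintro u w ⟨n, hn⟩ h
    exact ⟨n + 1, hstep hn h⟩
  have hF2 : ∀ {s : W}, H.Adj v₀ s → σ s = true → reach s → 2 * t - 1 ≤ dB s := by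
    intro s hs hst hr
    obtain ⟨s₀, hs₀, hs₀f, p, hp⟩ := hmem hr
    let q : H.Walk v₀ v₀ := SimpleGraph.Walk.cons hs₀ ((p.map ι).concat hs.symm)
    have hq : q.length = dB s + 2 := by
      simp only [q, SimpleGraph.Walk.length_cons, SimpleGraph.Walk.length_concat,
        SimpleGraph.Walk.length_map, hp]
    have hodds : Odd (dB s) := (hpar (hmem hr)).mpr hst
    have hoddq : Odd q.length := by
      rw [hq, Nat.odd_iff]
      rw [Nat.odd_iff] at hodds
      omega
    have := hgirth q hoddq
    omega
  let mcap : ℕ → ℕ := fun n =>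
    if n ≤ 2 * t - 1 then n else if n % 2 = 1 then 2 * t - 1 else 2 * t - 2
  let ψ : W → ZMod (2 * t + 1) := fun x =>
    if x = v₀ then 0
    else if reach x then ((1 + mcap (dB x) : ℕ) : ZMod (2 * t + 1))
    else if σ x then ((2 * t : ℕ) : ZMod (2 * t + 1)) else ((2 * t - 1 : ℕ) : ZMod (2 * t + 1))
  refine ⟨ψ, ?_⟩
  have hcastsucc : ∀ a b : ℕ, a = b + 1 →
      ((a : ℕ) : ZMod (2 * t + 1)) - ((b : ℕ) : ZMod (2 * t + 1)) = 1 := by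
    intro a b h; subst h; push_cast; ring
  have hneg : ((2 * t : ℕ) : ZMod (2 * t + 1)) = -1 := by
    have h0 : ((2 * t + 1 : ℕ) : ZMod (2 * t + 1)) = 0 := ZMod.natCast_self _
    push_cast at h0 ⊢
    linear_combination h0
  have hψv₀ : ψ v₀ = 0 := by simp only [ψ, if_pos rfl]
  have hval0 : ∀ {s : W}, H.Adj v₀ s → ψ s - ψ v₀ = 1 ∨ ψ v₀ - ψ s = 1 := by
    intro s hs
    have hsne : s ≠ v₀ := fun h => H.loopless.irrefl v₀ (h ▸ hs)
    by_cases hσs : σ s = false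
    · have h0 : (0 : ℕ) ∈ Sv s := ⟨s, hs, hσs, SimpleGraph.Walk.nil, rfl⟩
      have hr : reach s := ⟨0, h0⟩
      have hdb : dB s = 0 := Nat.eq_zero_of_le_zero (Nat.sInf_le h0)
      left
      have hm0 : mcap 0 = 0 := by simp [mcap]
      have : ψ s = ((1 : ℕ) : ZMod (2 * t + 1)) := by
        simp only [ψ, if_neg hsne, if_pos hr, hdb, hm0]
      rw [this, hψv₀]
      push_cast; ring
    · have hσs' : σ s = true := by revert hσs; cases σ s <;> simp
      have hψs : ψ s = ((2 * t : ℕ) : ZMod (2 * t + 1)) := by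
        by_cases hr : reach s
        · have h1 := hF2 hs hσs' hr
          have h2 : Odd (dB s) := (hpar (hmem hr)).mpr hσs'
          rw [Nat.odd_iff] at h2
          have hm : mcap (dB s) = 2 * t - 1 := by
            simp only [mcap]; split_ifs <;> omega
          have : ψ s = ((1 + mcap (dB s) : ℕ) : ZMod (2 * t + 1)) := by
            simp only [ψ, if_neg hsne, if_pos hr]
          rw [this, hm]
          congr 1; omega
        · simp only [ψ, if_neg hsne, if_neg hr, hσs', if_pos]
      right
      rw [hψs, hneg, hψv₀]; ring
  intro u w huw
  by_cases hu0 : u = v₀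
  · subst hu0
    exact (hval0 huw).symm
  by_cases hw0 : w = v₀
  · subst hw0
    exact hval0 huw.symm
  have hadj' : H'.Adj u w := ⟨huw, hu0, hw0⟩
  have hσuw := hσ huw hu0 hw0
  have hψu' : ψ u = if reach u then ((1 + mcap (dB u) : ℕ) : ZMod (2 * t + 1))
      else if σ u then ((2 * t : ℕ) : ZMod (2 * t + 1)) else ((2 * t - 1 : ℕ) : ZMod (2 * t + 1)) := by
    simp only [ψ, if_neg hu0]
  have hψw' : ψ w = if reach w then ((1 + mcap (dB w) : ℕ) : ZMod (2 * t + 1))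
      else if σ w then ((2 * t : ℕ) : ZMod (2 * t + 1)) else ((2 * t - 1 : ℕ) : ZMod (2 * t + 1)) := by
    simp only [ψ, if_neg hw0]
  by_cases hru : reach u
  · have hrw : reach w := hreach_step hru hadj'
    have h1 : dB u ≤ dB w + 1 := Nat.sInf_le (hstep (hmem hrw) hadj'.symm)
    have h2 : dB w ≤ dB u + 1 := Nat.sInf_le (hstep (hmem hru) hadj')
    have hpu : dB u % 2 = 1 ↔ σ u = true := by
      rw [← Nat.odd_iff]; exact hpar (hmem hru)
    have hpw : dB w % 2 = 1 ↔ σ w = true := by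
      rw [← Nat.odd_iff]; exact hpar (hmem hrw)
    have hne : dB u ≠ dB w := by
      intro h
      rw [h] at hpu
      exact hσuw (Bool.eq_iff_iff.mpr (hpu.symm.trans hpw))
    have hd : dB w = dB u + 1 ∨ dB u = dB w + 1 := by omega
    have hmstep : ∀ a : ℕ, mcap (a + 1) = mcap a + 1 ∨ mcap a = mcap (a + 1) + 1 := by
      intro a; simp only [mcap]; split_ifs <;> omega
    rw [hψu', if_pos hru, hψw', if_pos hrw]
    rcases hd with hd | hd
    · rcases hmstep (dB u) with hm | hm
      · right; rw [hd]; exact hcastsucc _ _ (by omega)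
      · left; rw [hd]; exact hcastsucc _ _ (by omega)
    · rcases hmstep (dB w) with hm | hm
      · left; rw [hd]; exact hcastsucc _ _ (by omega)
      · right; rw [hd]; exact hcastsucc _ _ (by omega)
  · have hrw : ¬ reach w := fun hrw => hru (hreach_step hrw hadj'.symm)
    rw [hψu', if_neg hru, hψw', if_neg hrw]
    cases hbu : σ u <;> cases hbw : σ w
    · rw [hbu, hbw] at hσuw; exact absurd rfl hσuw
    · right
      rw [if_neg (by simp : ¬((false : Bool) = true)), if_pos rfl]
      exact hcastsucc _ _ (by omega)
    · left
      rw [if_neg (by simp : ¬((false : Bool) = true)), if_pos rfl]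
      exact hcastsucc _ _ (by omega)
    · rw [hbu, hbw] at hσuw; exact absurd rfl hσuw


lemma fracChrom_bddBelow {V : Type*} [Fintype V] [DecidableEq V] (G : SimpleGraph V) :
    BddBelow {t : ℝ | ∃ y : Finset V → ℝ, (∀ I, 0 ≤ y I) ∧ (∀ I, ¬ IsIndep G I → y I = 0) ∧
    (∀ v : V, 1 ≤ ∑ I : Finset V, if v ∈ I then y I else 0) ∧ t = ∑ I : Finset V, y I} := by
  refine ⟨0, ?_⟩
  rintro x ⟨y, h1, -, -, rfl⟩
  exact Finset.sum_nonneg fun I _ => h1 I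

lemma fracChrom_le_of_hom {V : Type*} [Fintype V] [DecidableEq V] (G : SimpleGraph V)
    (t : ℕ) (ht : 1 ≤ t) (ψ : V → ZMod (2 * t + 1))
    (hψ : ∀ ⦃u w : V⦄, G.Adj u w → ψ u - ψ w = 1 ∨ ψ w - ψ u = 1) :
    fracChrom G ≤ 2 + 1 / (t : ℝ) := by
  classical
  haveI : NeZero (2 * t + 1) := ⟨by omega⟩
  have ht' : (0 : ℝ) < t := by exact_mod_cast ht
  have hinj : ∀ a b : ℕ, a < 2 * t + 1 → b < 2 * t + 1 →
      ((a : ℕ) : ZMod (2 * t + 1)) = ((b : ℕ) : ZMod (2 * t + 1)) → a = b := by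
    intro a b ha hb h
    have := congrArg ZMod.val h
    rwa [ZMod.val_natCast_of_lt ha, ZMod.val_natCast_of_lt hb] at this
  let Ind : ZMod (2 * t + 1) → Finset V :=
    fun j => univ.filter (fun v => ∃ a : ℕ, a < t ∧ ψ v = j + 2 * (a : ZMod (2 * t + 1)))
  let y : Finset V → ℝ :=
    fun I => ((univ.filter (fun j : ZMod (2 * t + 1) => Ind j = I)).card : ℝ) / t
  have hIndep : ∀ j, IsIndep G (Ind j) := by
    intro j u hu w hw hadj
    simp only [Ind, mem_filter, mem_univ, true_and] at hu hw
    obtain ⟨a, ha, hua⟩ := hu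
    obtain ⟨b, hb, hwb⟩ := hw
    rcases hψ hadj with hd | hd
    · rw [hua, hwb] at hd
      have hz : ((2 * a : ℕ) : ZMod (2 * t + 1)) = ((2 * b + 1 : ℕ) : ZMod (2 * t + 1)) := by
        push_cast
        linear_combination hd
      have := hinj _ _ (by omega) (by omega) hz
      omega
    · rw [hua, hwb] at hd
      have hz : ((2 * b : ℕ) : ZMod (2 * t + 1)) = ((2 * a + 1 : ℕ) : ZMod (2 * t + 1)) := by
        push_cast
        linear_combination hd
      have := hinj _ _ (by omega) (by omega) hz
      omega
  have hcount : ∀ v : V, (univ.filter (fun j : ZMod (2 * t + 1) => v ∈ Ind j)).card = t := by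
    intro v
    have himg : univ.filter (fun j : ZMod (2 * t + 1) => v ∈ Ind j)
        = (Finset.range t).image (fun a : ℕ => ψ v - 2 * (a : ZMod (2 * t + 1))) := by
      ext j
      simp only [mem_filter, mem_univ, true_and, Ind, mem_image, mem_range]
      constructor
      · rintro ⟨a, ha, hva⟩
        exact ⟨a, ha, by rw [hva]; ring⟩
      · rintro ⟨a, ha, rfl⟩
        exact ⟨a, ha, by ring⟩
    rw [himg, Finset.card_image_of_injOn, Finset.card_range]
    intro a ha b hb h
    simp only [mem_coe, mem_range] at ha hb
    have hz : ((2 * a : ℕ) : ZMod (2 * t + 1)) = ((2 * b : ℕ) : ZMod (2 * t + 1)) := by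
      push_cast
      linear_combination -h
    have := hinj _ _ (by omega) (by omega) hz
    omega
  have hfib : ∀ (s : Finset (ZMod (2 * t + 1))),
      s.card = ∑ I : Finset V, (s.filter (fun j => Ind j = I)).card :=
    fun s => Finset.card_eq_sum_card_fiberwise (fun j _ => mem_univ (Ind j))
  apply csInf_le (fracChrom_bddBelow G)
  refine ⟨y, fun I => div_nonneg (Nat.cast_nonneg _) (Nat.cast_nonneg _), ?_, ?_, ?_⟩
  · intro I hI
    have hempty : (univ.filter (fun j : ZMod (2 * t + 1) => Ind j = I)) = ∅ := by
      rw [Finset.filter_eq_empty_iff]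
      intro j _
      exact fun hj => hI (hj ▸ hIndep j)
    simp [y, hempty]
  · intro v
    have hnat : (univ.filter (fun j : ZMod (2 * t + 1) => v ∈ Ind j)).card
        = ∑ I : Finset V, if v ∈ I then
            (univ.filter (fun j : ZMod (2 * t + 1) => Ind j = I)).card else 0 := by
      rw [hfib (univ.filter (fun j : ZMod (2 * t + 1) => v ∈ Ind j))]
      refine Finset.sum_congr rfl fun I _ => ?_
      rw [Finset.filter_filter]
      by_cases hvI : v ∈ I
      · rw [if_pos hvI]
        congr 1
        ext j
        simp only [mem_filter, mem_univ, true_and]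
        exact ⟨fun h => h.2, fun h => ⟨h ▸ hvI, h⟩⟩
      · rw [if_neg hvI]
        rw [Finset.card_eq_zero, Finset.filter_eq_empty_iff]
        rintro j - ⟨hj1, hj2⟩
        exact hvI (hj2 ▸ hj1)
    have hcov : ∑ I : Finset V, (if v ∈ I then y I else 0)
        = ((univ.filter (fun j : ZMod (2 * t + 1) => v ∈ Ind j)).card : ℝ) / t := by
      rw [hnat]
      push_cast
      rw [Finset.sum_div]
      refine Finset.sum_congr rfl fun I _ => ?_
      by_cases hvI : v ∈ I <;> simp [y, hvI]
    rw [hcov, hcount v, div_self (ne_of_gt ht')]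
  · have h2 : ∑ I : Finset V, y I = ((2 * t + 1 : ℕ) : ℝ) / t := by
      simp only [y]
      rw [← Finset.sum_div]
      congr 1
      have hcu := hfib (univ : Finset (ZMod (2 * t + 1)))
      rw [Finset.card_univ, ZMod.card] at hcu
      exact_mod_cast hcu.symm
    rw [h2]
    push_cast
    field_simp


lemma fracChrom_set_nonempty {V : Type*} [Fintype V] [DecidableEq V] (G : SimpleGraph V) :
    {t : ℝ | ∃ y : Finset V → ℝ, (∀ I, 0 ≤ y I) ∧ (∀ I, ¬ IsIndep G I → y I = 0) ∧
    (∀ v : V, 1 ≤ ∑ I : Finset V, if v ∈ I then y I else 0) ∧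
      t = ∑ I : Finset V, y I}.Nonempty := by
  classical
  refine ⟨_, ⟨fun I => if ∃ v : V, I = {v} then 1 else 0, fun I => by positivity, ?_, ?_, rfl⟩⟩
  · intro I hI
    show (if ∃ v : V, I = {v} then (1 : ℝ) else 0) = 0
    rw [if_neg]
    rintro ⟨v, rfl⟩
    exact hI (by
      intro a ha b hb hadj
      rw [Finset.mem_singleton] at ha hb
      subst ha; subst hb
      exact G.loopless.irrefl _ hadj)
  · intro v
    have hterm : (if v ∈ ({v} : Finset V) then
        (if ∃ u : V, ({v} : Finset V) = {u} then (1 : ℝ) else 0) else 0) = 1 := by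
      rw [if_pos (Finset.mem_singleton_self v), if_pos ⟨v, rfl⟩]
    calc (1 : ℝ) = _ := hterm.symm
    _ ≤ _ := Finset.single_le_sum (f := fun I : Finset V =>
        if v ∈ I then (if ∃ u : V, I = {u} then (1 : ℝ) else 0) else 0)
        (fun I _ => by positivity) (Finset.mem_univ ({v} : Finset V))

lemma indep_cycle_inter {V : Type*} [Fintype V] [DecidableEq V] {G : SimpleGraph V}
    {x : V} {c : G.Walk x x} (hc : c.IsCycle) {k : ℕ} (hlen : c.length = 2 * k + 1)
    {I : Finset V} (hI : IsIndep G I) :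
    (c.support.tail.toFinset ∩ I).card ≤ k := by
  classical
  set L := c.support.tail with hL
  have hnodupL : L.Nodup := hc.support_nodup
  have hlenL : L.length = 2 * k + 1 := by
    rw [hL, List.length_tail, c.length_support, hlen]
    omega
  have hLne : L ≠ [] := by
    intro h; rw [h] at hlenL; simp at hlenL
  -- adjacency with formPerm successor
  have hadj : ∀ a ∈ L, G.Adj a (L.formPerm a) := by
    intro a ha
    obtain ⟨i, hi, rfl⟩ := List.mem_iff_getElem.mp ha
    rw [List.formPerm_apply_getElem _ hnodupL i hi]
    have hchain : List.IsChain G.Adj c.support := c.isChain_adj_support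
    have hsupp : c.support = x :: L := by rw [hL, ← SimpleGraph.Walk.support_eq_cons]
    rw [List.isChain_iff_getElem] at hchain
    by_cases hlast : i + 1 < L.length
    · simp only [Nat.mod_eq_of_lt hlast]
      have hcl : c.support.length = L.length + 1 := by rw [hsupp]; simp
      have := hchain (i + 1) (by omega)
      have e1 : c.support[i + 1]'(by omega) = L[i] := by
        simp [hsupp, List.get_cons_succ]
      have e2 : c.support[i + 1 + 1]'(by omega) = L[i + 1] := by
        simp [hsupp, List.get_cons_succ]
      rwa [e1, e2] at this
    · have hi' : i + 1 = L.length := by omega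
      simp only [hi', Nat.mod_self]
      -- L[i] = x since last of support is x
      have hlastx : L[i] = x := by
        have hgl : c.support.getLast (by simp) = x := c.getLast_support
        rw [List.getLast_eq_getElem] at hgl
        simp only [hsupp, List.length_cons] at hgl
        have hidx : L.length + 1 - 1 = i + 1 := by omega
        simp only [hidx, List.getElem_cons_succ] at hgl
        exact hgl
      rw [hlastx]
      -- G.Adj x L[0] : first step
      have h0 := hchain 0 (by rw [hsupp]; simp; omega)
      have e1 : c.support.get ⟨0, by rw [hsupp]; simp⟩ = x := by simp [hsupp]
      have e2 : c.support.get ⟨1, by rw [hsupp]; simp; omega⟩ = L[0]'(by omega) := by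
        simp [hsupp]
      simpa [hsupp] using h0
  -- injection
  set C : Finset V := L.toFinset with hC
  have hcardC : C.card = 2 * k + 1 := by
    rw [hC, List.toFinset_card_of_nodup hnodupL, hlenL]
  set M := C ∩ I with hM
  have hmap : ∀ a ∈ M, L.formPerm a ∈ C \ M := by
    intro a ha
    rw [hM, Finset.mem_inter] at ha
    have haL : a ∈ L := List.mem_toFinset.mp ha.1
    have hfL : L.formPerm a ∈ L := List.formPerm_apply_mem_of_mem haL
    rw [Finset.mem_sdiff]
    refine ⟨List.mem_toFinset.mpr hfL, ?_⟩
    rw [hM, Finset.mem_inter]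
    rintro ⟨-, hfI⟩
    exact hI ha.2 hfI (hadj a haL)
  have hinjOn : Set.InjOn L.formPerm M := fun a _ b _ h => L.formPerm.injective h
  have hcard := Finset.card_le_card_of_injOn _ hmap hinjOn
  have hsub : M ⊆ C := Finset.inter_subset_left
  have hle := Finset.card_le_card hsub
  rw [Finset.card_sdiff_of_subset hsub] at hcard
  omega

lemma fracChrom_lower {V : Type*} [Fintype V] [DecidableEq V] (G : SimpleGraph V) (k : ℕ)
    (hk : 1 ≤ k) {x : V} (c : G.Walk x x) (hc : c.IsCycle) (hlen : c.length = 2 * k + 1) :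
    2 + 1 / (k : ℝ) ≤ fracChrom G := by
  classical
  have hk' : (0 : ℝ) < k := by exact_mod_cast hk
  apply le_csInf (fracChrom_set_nonempty G)
  rintro b ⟨y, h1, h2, h3, rfl⟩
  set C : Finset V := c.support.tail.toFinset with hC
  have hcardC : C.card = 2 * k + 1 := by
    rw [hC, List.toFinset_card_of_nodup hc.support_nodup, List.length_tail, c.length_support,
      hlen]
    omega
  have key : ((2 * k + 1 : ℕ) : ℝ) ≤ (k : ℝ) * ∑ I : Finset V, y I := by
    calc ((2 * k + 1 : ℕ) : ℝ) = ∑ _v ∈ C, (1 : ℝ) := by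
          rw [Finset.sum_const, hcardC]; simp
    _ ≤ ∑ v ∈ C, ∑ I : Finset V, (if v ∈ I then y I else 0) :=
          Finset.sum_le_sum fun v _ => h3 v
    _ = ∑ I : Finset V, ∑ v ∈ C, (if v ∈ I then y I else 0) := Finset.sum_comm
    _ = ∑ I : Finset V, ((C ∩ I).card : ℝ) * y I := by
          refine Finset.sum_congr rfl fun I _ => ?_
          rw [Finset.sum_ite, Finset.sum_const_zero, add_zero, Finset.sum_const,
            Finset.filter_mem_eq_inter]
          simp [mul_comm]
    _ ≤ ∑ I : Finset V, (k : ℝ) * y I := by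
          refine Finset.sum_le_sum fun I _ => ?_
          by_cases hyI : y I = 0
          · simp [hyI]
          · have hIind : IsIndep G I := by
              by_contra hni
              exact hyI (h2 I hni)
            have hle := indep_cycle_inter hc hlen hIind
            have : ((C ∩ I).card : ℝ) ≤ (k : ℝ) := by exact_mod_cast hle
            exact mul_le_mul_of_nonneg_right this (h1 I)
    _ = (k : ℝ) * ∑ I : Finset V, y I := by rw [Finset.mul_sum]
  have heq : (2 : ℝ) + 1 / (k : ℝ) = ((2 * k + 1 : ℕ) : ℝ) / k := by
    push_cast; field_simp
  rw [heq, div_le_iff₀ hk']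
  calc ((2 * k + 1 : ℕ) : ℝ) ≤ (k : ℝ) * ∑ I : Finset V, y I := key
  _ = (∑ I : Finset V, y I) * k := mul_comm _ _

end AuxLemmas

/-- for a non-bipartite 3-colorable graph with color classes `V₁,V₂,V₃`,
each contraction `G/Vᵢ` is non-bipartite, and the fractional chromatic number is at most
`2 + minᵢ 1/(ρᵢ - 1)`, with equality if some color class is a singleton. -/
theorem fracChrom_three_colorable {V : Type*} [Fintype V] [DecidableEq V]
    (G : SimpleGraph V) (hnb : ¬ G.Colorable 2)
    (Vc : Fin 3 → Finset V)
    (hcover : ∀ v : V, ∃! i : Fin 3, v ∈ Vc i)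
    (hind : ∀ i, IsIndep G (Vc i)) :
    (∀ i : Fin 3, ¬ (contract G ↑(Vc i)).Colorable 2) ∧
      ∀ ρ : Fin 3 → ℕ,
        (∀ i : Fin 3, 2 ≤ ρ i ∧ HasOddGirth (contract G ↑(Vc i)) (2 * ρ i - 1)) →
        (fracChrom G ≤ 2 +
            min (1 / ((ρ 0 : ℝ) - 1)) (min (1 / ((ρ 1 : ℝ) - 1)) (1 / ((ρ 2 : ℝ) - 1)))) ∧
          ((∃ i : Fin 3, (Vc i).card = 1) →
            fracChrom G = 2 +
              min (1 / ((ρ 0 : ℝ) - 1)) (min (1 / ((ρ 1 : ℝ) - 1)) (1 / ((ρ 2 : ℝ) - 1)))) := by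
  classical
  have hfin3 : ∀ j i : Fin 3, j ≠ i → j ≠ i + 1 → j = i + 2 := by decide
  have hq : ∀ (i : Fin 3) (u w : V), G.Adj u w →
      (contract G ↑(Vc i)).Adj
        (if hu : u ∈ (↑(Vc i) : Set V) then none else some ⟨u, hu⟩)
        (if hw : w ∈ (↑(Vc i) : Set V) then none else some ⟨w, hw⟩) := by
    intro i u w h
    by_cases hu : u ∈ (↑(Vc i) : Set V) <;> by_cases hw : w ∈ (↑(Vc i) : Set V)
    · exact absurd h (hind i (by simpa using hu) (by simpa using hw))
    · rw [dif_pos hu, dif_neg hw]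
      simp only [contract]
      rw [SimpleGraph.fromRel_adj]
      exact ⟨by simp, Or.inr ⟨u, hu, h.symm⟩⟩
    · rw [dif_neg hu, dif_pos hw]
      simp only [contract]
      rw [SimpleGraph.fromRel_adj]
      exact ⟨by simp, Or.inl ⟨w, hw, h⟩⟩
    · rw [dif_neg hu, dif_neg hw]
      simp only [contract]
      rw [SimpleGraph.fromRel_adj]
      exact ⟨by simp [Subtype.ext_iff, h.ne], Or.inl h⟩
  have hadj_some : ∀ (i : Fin 3) (u w : {v : V // v ∉ (↑(Vc i) : Set V)}),
      (contract G ↑(Vc i)).Adj (some u) (some w) → G.Adj u.1 w.1 := by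
    intro i u w h
    simp only [contract] at h
    rw [SimpleGraph.fromRel_adj] at h
    obtain ⟨-, h | h⟩ := h
    · exact h
    · exact h.symm
  have part1 : ∀ i : Fin 3, ¬(contract G ↑(Vc i)).Colorable 2 := by
    intro i hcol
    obtain ⟨col⟩ := hcol
    exact hnb ⟨col.comp ⟨fun v => if hv : v ∈ (↑(Vc i) : Set V) then none else some ⟨v, hv⟩,
      fun {a b} hab => hq i a b hab⟩⟩
  refine ⟨part1, ?_⟩
  intro ρ hρ
  -- upper bound for each i
  have upper : ∀ i : Fin 3, fracChrom G ≤ 2 + 1 / ((ρ i : ℝ) - 1) := by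
    intro i
    obtain ⟨hρi, hOG⟩ := hρ i
    set t : ℕ := ρ i - 1 with ht'
    have ht : 1 ≤ t := by omega
    have hsigma : ∀ ⦃u w : Option {v : V // v ∉ (↑(Vc i) : Set V)}⦄,
        (contract G ↑(Vc i)).Adj u w → u ≠ none → w ≠ none →
        (fun x : Option {v : V // v ∉ (↑(Vc i) : Set V)} => match x with
          | none => false
          | some u => decide (u.1 ∈ Vc (i + 1))) u ≠
        (fun x : Option {v : V // v ∉ (↑(Vc i) : Set V)} => match x with
          | none => false
          | some u => decide (u.1 ∈ Vc (i + 1))) w := by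
      intro u w huw hu hw
      cases u with
      | none => exact absurd rfl hu
      | some u' =>
        cases w with
        | none => exact absurd rfl hw
        | some w' =>
          have hG : G.Adj u'.1 w'.1 := hadj_some i u' w' huw
          show decide (u'.1 ∈ Vc (i + 1)) ≠ decide (w'.1 ∈ Vc (i + 1))
          have hu2 : u'.1 ∉ Vc i := by simpa using u'.2
          have hw2 : w'.1 ∉ Vc i := by simpa using w'.2
          by_cases h1 : u'.1 ∈ Vc (i + 1) <;> by_cases h2 : w'.1 ∈ Vc (i + 1)
          · exact absurd hG (hind (i + 1) h1 h2)
          · simp [h1, h2]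
          · simp [h1, h2]
          · have hu3 : u'.1 ∈ Vc (i + 2) := by
              obtain ⟨j, hj, -⟩ := hcover u'.1
              have := hfin3 j i (fun e => hu2 (e ▸ hj)) (fun e => h1 (e ▸ hj))
              exact this ▸ hj
            have hw3 : w'.1 ∈ Vc (i + 2) := by
              obtain ⟨j, hj, -⟩ := hcover w'.1
              have := hfin3 j i (fun e => hw2 (e ▸ hj)) (fun e => h2 (e ▸ hj))
              exact this ▸ hj
            exact absurd hG (hind (i + 2) hu3 hw3)
    have hgir : ∀ cw : (contract G ↑(Vc i)).Walk none none, Odd cw.length →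
        2 * t + 1 ≤ cw.length := by
      intro cw hodd
      obtain ⟨x', c', hc', hodd', hle⟩ := exists_odd_cycle cw hodd
      have h2 := hOG.2.2 x' c' hc' hodd'
      omega
    obtain ⟨ψH, hψH⟩ := hom_to_odd_cycle (contract G ↑(Vc i)) none
      (fun x => match x with
        | none => false
        | some u => decide (u.1 ∈ Vc (i + 1))) t ht hsigma hgir
    have hmain := fracChrom_le_of_hom G t ht
      (fun v => ψH (if hv : v ∈ (↑(Vc i) : Set V) then none else some ⟨v, hv⟩))
      (fun u w h => hψH (hq i u w h))
    have hcast : ((t : ℕ) : ℝ) = (ρ i : ℝ) - 1 := by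
      rw [ht', Nat.cast_sub (by omega : 1 ≤ ρ i), Nat.cast_one]
    rwa [hcast] at hmain
  have hup : fracChrom G ≤ 2 +
      min (1 / ((ρ 0 : ℝ) - 1)) (min (1 / ((ρ 1 : ℝ) - 1)) (1 / ((ρ 2 : ℝ) - 1))) := by
    have h0 := upper 0
    have h1 := upper 1
    have h2 := upper 2
    have : fracChrom G - 2 ≤
        min (1 / ((ρ 0 : ℝ) - 1)) (min (1 / ((ρ 1 : ℝ) - 1)) (1 / ((ρ 2 : ℝ) - 1))) :=
      le_min (by linarith) (le_min (by linarith) (by linarith))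
    linarith
  refine ⟨hup, ?_⟩
  rintro ⟨i, hcard⟩
  obtain ⟨hρi, hOG⟩ := hρ i
  obtain ⟨v, hv⟩ := Finset.card_eq_one.mp hcard
  obtain ⟨-, ⟨x₀, c₀, hc₀, hlen₀⟩, -⟩ := hOG
  have hvmem : v ∈ (↑(Vc i) : Set V) := by rw [hv]; simp
  let g : Option {v' : V // v' ∉ (↑(Vc i) : Set V)} → V := fun x =>
    match x with
    | none => v
    | some u => u.1
  have hgadj : ∀ a b, (contract G ↑(Vc i)).Adj a b → G.Adj (g a) (g b) := by
    intro a b hab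
    simp only [contract] at hab
    rw [SimpleGraph.fromRel_adj] at hab
    obtain ⟨hne, hab⟩ := hab
    cases a with
    | none =>
      cases b with
      | none => exact absurd rfl hne
      | some w' =>
        rcases hab with h | ⟨s, hs, hadj⟩
        · exact h.elim
        · have hsv : s = v := by
            have : s ∈ Vc i := by simpa using hs
            rw [hv] at this
            simpa using this
          subst hsv
          exact hadj.symm
    | some u' =>
      cases b with
      | none =>
        rcases hab with ⟨s, hs, hadj⟩ | h
        · have hsv : s = v := by
            have : s ∈ Vc i := by simpa using hs
            rw [hv] at this
            simpa using this
          subst hsv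
          exact hadj
        · exact h.elim
      | some w' =>
        rcases hab with h | h
        · exact h
        · exact h.symm
  have hginj : Function.Injective g := by
    intro a b hab
    cases a with
    | none =>
      cases b with
      | none => rfl
      | some w' =>
        have hab' : v = w'.1 := hab
        exact absurd (hab' ▸ hvmem) (by simpa using w'.2)
    | some u' =>
      cases b with
      | none =>
        have hab' : u'.1 = v := hab
        exact absurd (hab'.symm ▸ hvmem) (by simpa using u'.2)
      | some w' => exact congrArg some (Subtype.ext hab)
  let f : (contract G ↑(Vc i)) →g G := ⟨g, fun {a b} h => hgadj a b h⟩
  have hcyc : (c₀.map f).IsCycle :=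
    (SimpleGraph.Walk.map_isCycle_iff_of_injective hginj).mpr hc₀
  have hlow' := fracChrom_lower G (ρ i - 1) (by omega) (c₀.map f) hcyc
    (by rw [SimpleGraph.Walk.length_map, hlen₀]; omega)
  have hcast : ((ρ i - 1 : ℕ) : ℝ) = (ρ i : ℝ) - 1 := by
    rw [Nat.cast_sub (by omega : 1 ≤ ρ i), Nat.cast_one]
  rw [hcast] at hlow'
  have hmin_le : min (1 / ((ρ 0 : ℝ) - 1)) (min (1 / ((ρ 1 : ℝ) - 1)) (1 / ((ρ 2 : ℝ) - 1)))
      ≤ 1 / ((ρ i : ℝ) - 1) := by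
    fin_cases i
    · exact min_le_left _ _
    · exact le_trans (min_le_right _ _) (min_le_left _ _)
    · exact le_trans (min_le_right _ _) (min_le_right _ _)
  linarith
end

section
/- Let G = (V,E) be a finite non-bipartite simple graph with a proper 3-coloring with color classes V₁, V₂, V₃, and for each i ∈ {1,2,3} let 2ρ_i−1 be the odd girth of the (non-bipartite) contraction G/V_i. Then the integrality gap of the standard vertex cover LP relaxation of G satisfies IG(G) ≤ 1 + min_{i∈{1,2,3}} 1/(2ρ_i − 1); that is, for every w : V → ℝ≥0, OPT(G,w) ≤ (1 + min_i 1/(2ρ_i − 1)) · LP(G,w). Moreover, if one of the color classes consists of a single vertex, then IG(G) = 1 + min_{i∈{1,2,3}} 1/(2ρ_i − 1), where IG(G) is the supremum of OPT(G,w)/LP(G,w) over all w : V → ℝ≥0 with LP(G,w) > 0. -/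
open Finset

/-- The integrality gap of the standard vertex cover LP relaxation of `G`. -/
noncomputable def IG {V : Type*} [Fintype V] (G : SimpleGraph V) : ℝ :=
  sSup {t : ℝ | ∃ w : V → ℝ, (∀ v, 0 ≤ w v) ∧ 0 < LPval G w ∧ t = OPT G w / LPval G w}


namespace IGaux
section WalkLemmas
variable {V : Type*} {H : SimpleGraph V}


variable {V : Type*} {H : SimpleGraph V}

/-- An edge `s(y,x)` in a path from `x` to `y` forces the path to have length 1. -/
lemma path_edge_end {x y : V} (p : H.Walk x y) (hp : p.IsPath)
    (he : s(y, x) ∈ p.edges) : p.length = 1 := by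
  induction p with
  | nil => simp at he
  | @cons a b c h q ih =>
    rw [SimpleGraph.Walk.cons_isPath_iff] at hp
    simp only [SimpleGraph.Walk.edges_cons, List.mem_cons] at he
    rcases he with he | he
    · rw [Sym2.eq_iff] at he
      have hcb : c = b := by
        rcases he with ⟨rfl, rfl⟩ | ⟨h1, h2⟩
        · exact absurd rfl h.ne
        · exact h1
      subst hcb
      cases q with
      | nil => simp
      | @cons d e f h' q' =>
        exfalso
        have hmem : c ∈ q'.support := q'.end_mem_support
        have hnd := hp.1.support_nodup
        simp only [SimpleGraph.Walk.support_cons, List.nodup_cons] at hnd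
        exact hnd.1 hmem
    · exfalso
      have : a ∈ q.support := q.snd_mem_support_of_mem_edges he
      exact hp.2 this

/-- An odd closed walk contains an odd cycle of at most the same length. -/
lemma odd_closed_walk_cycle :
    ∀ (n : ℕ) {a : V} (c : H.Walk a a), c.length = n → Odd n →
      ∃ (b : V) (p : H.Walk b b), p.IsCycle ∧ Odd p.length ∧ p.length ≤ n := by
  intro n
  induction n using Nat.strong_induction_on with
  | _ n ih =>
  intro a c hlen hodd
  letI : DecidableEq V := Classical.decEq V
  by_cases hnd : c.support.tail.Nodup
  · -- c is a cycle (or degenerate)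
    cases c with
    | nil =>
      exfalso
      simp only [SimpleGraph.Walk.length_nil] at hlen
      rw [← hlen] at hodd
      simp at hodd
    | @cons _ b _ h rest =>
      simp only [SimpleGraph.Walk.support_cons, List.tail_cons] at hnd
      have hpath : rest.IsPath := by
        rw [SimpleGraph.Walk.isPath_def]; exact hnd
      have hlen1 : rest.length + 1 = n := by
        simpa using hlen
      have hodd' : Odd (rest.length + 1) := hlen1 ▸ hodd
      have hne : s(a, b) ∉ rest.edges := by
        intro hmem
        have h2 := path_edge_end rest hpath hmem
        rw [h2] at hodd'
        norm_num [Nat.odd_iff] at hodd'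
      refine ⟨a, SimpleGraph.Walk.cons h rest, ?_, ?_, ?_⟩
      · exact (SimpleGraph.Walk.cons_isCycle_iff rest h).mpr ⟨hpath, hne⟩
      · simpa [hlen1] using hodd
      · simp [hlen1]
  · -- a repeated vertex: split
    obtain ⟨x, hx2⟩ : ∃ x, 2 ≤ c.support.tail.count x := by
      by_contra hcon
      push_neg at hcon
      exact hnd (List.nodup_iff_count_le_one.mpr fun x => by
        have := hcon x; omega)
    have hxmem : x ∈ c.support := by
      have : x ∈ c.support.tail := List.count_pos_iff.mp (by omega)
      exact List.mem_of_mem_tail this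
    have hc'len : (c.rotate x hxmem).length = c.length := by
      have h1 := congrArg SimpleGraph.Walk.length (c.take_spec hxmem)
      simp only [SimpleGraph.Walk.length_append] at h1
      simp only [SimpleGraph.Walk.rotate, SimpleGraph.Walk.length_append]
      omega
    set c' := c.rotate x hxmem with hc'
    have hc'cnt : 2 ≤ c'.support.tail.count x := by
      have hr := c.support_rotate x hxmem
      rwa [hr.perm.count_eq]
    rw [hlen] at hc'len
    clear_value c'
    cases c' with
    | nil =>
      exfalso
      simp only [SimpleGraph.Walk.length_nil] at hc'len
      rw [← hc'len] at hodd
      simp at hodd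
    | @cons _ y _ hxy rest2 =>
      have hrest2sup : rest2.support = (SimpleGraph.Walk.cons hxy rest2).support.tail := by
        simp
      have hxrest2 : x ∈ rest2.support := by
        rw [hrest2sup]
        exact List.count_pos_iff.mp (by omega)
      have hsum : (rest2.takeUntil x hxrest2).length + (rest2.dropUntil x hxrest2).length
          = rest2.length := by
        have h := congrArg SimpleGraph.Walk.length (rest2.take_spec hxrest2)
        rw [SimpleGraph.Walk.length_append] at h
        exact h
      have hlenc' : rest2.length + 1 = n := by
        simpa using hc'len
      have hd2pos : 1 ≤ (rest2.dropUntil x hxrest2).length := by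
        by_contra hcon
        push_neg at hcon
        have hd0 : (rest2.dropUntil x hxrest2).length = 0 := by omega
        have hcount : rest2.support.count x
            = (rest2.takeUntil x hxrest2).support.count x
              + (rest2.dropUntil x hxrest2).support.tail.count x := by
          have h := congrArg (fun l => List.count x l)
            (congrArg SimpleGraph.Walk.support (rest2.take_spec hxrest2))
          simp only [SimpleGraph.Walk.support_append, List.count_append] at h
          exact h.symm
        have h1 : (rest2.takeUntil x hxrest2).support.count x = 1 :=
          rest2.count_support_takeUntil_eq_one hxrest2
        have h0 : (rest2.dropUntil x hxrest2).support.tail = [] := by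
          have hl : (rest2.dropUntil x hxrest2).support.length
              = (rest2.dropUntil x hxrest2).length + 1 :=
            SimpleGraph.Walk.length_support _
          rw [hd0] at hl
          rcases hs : (rest2.dropUntil x hxrest2).support with _ | ⟨z, l⟩
          · simp
          · rw [hs] at hl
            simp only [List.length_cons] at hl
            have : l = [] := List.eq_nil_of_length_eq_zero (by omega)
            simp [this]
        rw [hrest2sup] at hcount
        rw [h1, h0] at hcount
        simp only [List.count_nil] at hcount
        omega
      have hc1len : (SimpleGraph.Walk.cons hxy (rest2.takeUntil x hxrest2)).length
          = (rest2.takeUntil x hxrest2).length + 1 := by simp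
      have htot : (SimpleGraph.Walk.cons hxy (rest2.takeUntil x hxrest2)).length
          + (rest2.dropUntil x hxrest2).length = n := by omega
      have hon := Nat.odd_iff.mp hodd
      rcases Nat.even_or_odd (SimpleGraph.Walk.cons hxy (rest2.takeUntil x hxrest2)).length
        with hpar | hpar
      · have hoddd : Odd (rest2.dropUntil x hxrest2).length := by
          have he := Nat.even_iff.mp hpar
          rw [Nat.odd_iff]
          omega
        obtain ⟨b, p, hp1, hp2, hp3⟩ := ih (rest2.dropUntil x hxrest2).length
          (by omega) (rest2.dropUntil x hxrest2) rfl hoddd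
        exact ⟨b, p, hp1, hp2, by omega⟩
      · obtain ⟨b, p, hp1, hp2, hp3⟩ := ih
          (SimpleGraph.Walk.cons hxy (rest2.takeUntil x hxrest2)).length
          (by omega) _ rfl hpar
        exact ⟨b, p, hp1, hp2, by omega⟩


end WalkLemmas
section CountLemmas
variable {V : Type*} [DecidableEq V] {H : SimpleGraph V}
variable {V : Type*} [DecidableEq V] {H : SimpleGraph V}



lemma countP_edges_zero {a b v : V} (p : H.Walk a b) (hv : v ∉ p.support) :
    p.edges.countP (fun e => v ∈ e) = 0 := by
  rw [List.countP_eq_zero]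
  intro e he
  simp only [decide_eq_true_eq]
  rcases e with ⟨x, y⟩
  intro hmem
  rcases Sym2.mem_iff.mp hmem with rfl | rfl
  · exact hv (p.fst_mem_support_of_mem_edges he) |>.elim
  · exact hv (p.snd_mem_support_of_mem_edges he) |>.elim

lemma countP_edges_start {a b : V} (p : H.Walk a b) (hp : p.support.Nodup) :
    p.edges.countP (fun e => a ∈ e) ≤ 1 := by
  induction p with
  | nil => simp
  | @cons a c b h q ih =>
    simp only [SimpleGraph.Walk.support_cons, List.nodup_cons] at hp
    have h0 : q.edges.countP (fun e => a ∈ e) = 0 := countP_edges_zero q hp.1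
    simp only [SimpleGraph.Walk.edges_cons, List.countP_cons, h0]
    split <;> simp

lemma countP_edges_path {a b v : V} (p : H.Walk a b) (hp : p.support.Nodup) :
    p.edges.countP (fun e => v ∈ e) ≤ 2 := by
  induction p with
  | nil => simp
  | @cons a c b h q ih =>
    simp only [SimpleGraph.Walk.support_cons, List.nodup_cons] at hp
    simp only [SimpleGraph.Walk.edges_cons, List.countP_cons]
    by_cases hva : v = a
    · subst hva
      have h0 : q.edges.countP (fun e => v ∈ e) = 0 := countP_edges_zero q hp.1
      rw [h0]
      split <;> omega
    · by_cases hvc : v = c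
      · subst hvc
        have h1 := countP_edges_start q hp.2
        split <;> omega
      · have h2 := ih hp.2
        split
        · rename_i hmem
          simp only [decide_eq_true_eq, Sym2.mem_iff] at hmem
          tauto
        · omega


lemma countP_edges_cycle {a v : V} (c : H.Walk a a) (hc : c.IsCycle) :
    c.edges.countP (fun e => v ∈ e) ≤ 2 := by
  cases c with
  | nil => simp at hc
  | @cons _ b _ h rest =>
    have hnd : rest.support.Nodup := by
      have := hc.support_nodup
      simpa using this
    simp only [SimpleGraph.Walk.edges_cons, List.countP_cons]
    by_cases hva : v = a
    · subst hva
      have h1 : rest.edges.countP (fun e => v ∈ e) ≤ 1 := by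
        have hrev := countP_edges_start rest.reverse
          (by rw [SimpleGraph.Walk.support_reverse]; exact List.nodup_reverse.mpr hnd)
        rwa [SimpleGraph.Walk.edges_reverse, List.countP_reverse] at hrev
      split <;> omega
    · by_cases hvb : v = b
      · subst hvb
        have h1 := countP_edges_start rest hnd
        split <;> omega
      · have h2 := countP_edges_path rest hnd (v := v)
        split
        · rename_i hmem
          simp only [decide_eq_true_eq, Sym2.mem_iff] at hmem
          tauto
        · omega

lemma cycle_cover_card {a : V} (c : H.Walk a a) (hc : c.IsCycle)
    {C : Finset V} (hC : IsVC H C) :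
    c.length ≤ 2 * (C ∩ c.support.toFinset).card := by
  classical
  have hchoice : ∀ e ∈ c.edges.toFinset, ∃ v : V, v ∈ e ∧ v ∈ C ∩ c.support.toFinset := by
    intro e he
    rw [List.mem_toFinset] at he
    induction e using Sym2.inductionOn with
    | _ x y =>
      have hadj : H.Adj x y := c.adj_of_mem_edges he
      have hx : x ∈ c.support := c.fst_mem_support_of_mem_edges he
      have hy : y ∈ c.support := c.snd_mem_support_of_mem_edges he
      rcases hC hadj with hmem | hmem
      · exact ⟨x, by simp, by simp [hmem, hx]⟩
      · exact ⟨y, by simp, by simp [hmem, hy]⟩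
  choose g hg1 hg2 using hchoice
  have hlen : c.edges.toFinset.card = c.length := by
    rw [List.toFinset_card_of_nodup hc.edges_nodup, SimpleGraph.Walk.length_edges]
  calc c.length = c.edges.toFinset.card := hlen.symm
    _ ≤ 2 * (c.edges.toFinset.image
          (fun e => if he : e ∈ c.edges.toFinset then g e he else a)).card := by
        apply Finset.card_le_mul_card_image
        intro v hv
        have hsub2 : (c.edges.toFinset.filter
            (fun e => (if he : e ∈ c.edges.toFinset then g e he else a) = v))
            ⊆ (c.edges.filter (fun e => v ∈ e)).toFinset := by
          intro e he
          simp only [Finset.mem_filter] at he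
          rcases he with ⟨he1, he2⟩
          rw [List.mem_toFinset, List.mem_filter]
          refine ⟨List.mem_toFinset.mp he1, ?_⟩
          rw [dif_pos he1] at he2
          simp only [decide_eq_true_eq]
          exact he2 ▸ hg1 e he1
        refine le_trans (Finset.card_le_card hsub2) ?_
        refine le_trans (List.toFinset_card_le _) ?_
        rw [← List.countP_eq_length_filter]
        exact countP_edges_cycle c hc
    _ ≤ 2 * (C ∩ c.support.toFinset).card := by
        apply Nat.mul_le_mul_left
        apply Finset.card_le_card
        intro v hv
        simp only [Finset.mem_image] at hv
        obtain ⟨e, he, hev⟩ := hv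
        rw [dif_pos he] at hev
        exact hev ▸ hg2 e he

end CountLemmas


/-- Position on the odd cycle `Z_{2k+1}`, as an integer in `[-k, k]`. -/
def pos (k : ℕ) (s : ℤ) (j : ℕ) : ℤ :=
  if j = k then (if s = 0 then (k:ℤ) else -(k:ℤ))
  else (if (s + j) % 2 = (k:ℤ) % 2 then (j:ℤ) else -(j:ℤ))

lemma pos_one (k : ℕ) (s : ℤ) : pos k s 1 = 1 ∨ pos k s 1 = -1 := by
  unfold pos
  split_ifs with h1 h2 h3 <;> omega

lemma pure_pos (k : ℕ) (hk : 1 ≤ k) (s1 s2 : ℤ)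
    (hs : (s1 = 0 ∧ s2 = 1) ∨ (s1 = 1 ∧ s2 = 0)) (j1 j2 : ℕ)
    (h1 : 1 ≤ j1) (h2 : 1 ≤ j2)
    (hcase : (j1 = k ∧ j2 = k) ∨ (j2 = j1 + 1 ∧ j2 ≤ k) ∨ (j1 = j2 + 1 ∧ j1 ≤ k)) :
    pos k s1 j1 - pos k s2 j2 = 1 ∨ pos k s1 j1 - pos k s2 j2 = -1 ∨
    pos k s1 j1 - pos k s2 j2 = 2*(k:ℤ) ∨ pos k s1 j1 - pos k s2 j2 = -(2*(k:ℤ)) := by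
  unfold pos
  rcases hcase with ⟨rfl, h⟩ | ⟨h, h'⟩ | ⟨h, h'⟩ <;>
    rcases hs with ⟨rfl, rfl⟩ | ⟨rfl, rfl⟩ <;>
      split_ifs <;> omega


section Round




lemma key_int (K m T r r' : ℤ) (hm : 1 ≤ m) (hK : m ≤ K) (hT : T = 2*K + m)
    (hr : 0 ≤ r) (hr2 : r < T) (hr' : r' = (r + K) % T) :
    |T - 2*r| + |T - 2*r'| ≤ T + m := by
  have hrr' : (r' = r + K ∧ r + K < T) ∨ (r' = r + K - T ∧ T ≤ r + K) := by
    by_cases hcase : r + K < T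
    · left
      rw [hr', Int.emod_eq_of_lt (by omega) hcase]
      exact ⟨rfl, hcase⟩
    · right
      have h2 : (r + K) % T = (r + K - T) % T := by
        conv_lhs => rw [show r + K = (r + K - T) + T * 1 by ring]
        rw [Int.add_mul_emod_self_left]
      rw [hr', h2, Int.emod_eq_of_lt (by omega) (by omega)]
      exact ⟨rfl, by omega⟩
  rcases hrr' with ⟨rfl, hc⟩ | ⟨rfl, hc⟩ <;>
    rcases abs_cases (T - 2*r) with ⟨h1, h1'⟩ | ⟨h1, h1'⟩ <;>
      first
        | (rcases abs_cases (T - 2*(r + K)) with ⟨h2, h2'⟩ | ⟨h2, h2'⟩ <;> omega)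
        | (rcases abs_cases (T - 2*(r + K - T)) with ⟨h2, h2'⟩ | ⟨h2, h2'⟩ <;> omega)

lemma neg_emod_one (L a : ℤ) (hL : 1 < L) (h : a % L = L - 1) : (-a) % L = 1 := by
  have hed := Int.emod_add_mul_ediv a L
  have hkey : -a = 1 + L * (-1 - a / L) := by
    have expand : L * (-1 - a / L) = -L - L * (a / L) := by ring
    rw [expand]
    omega
  rw [hkey, Int.add_mul_emod_self_left, Int.emod_eq_of_lt (by omega) (by omega)]

lemma emod_shift1 (T a c : ℤ) : ((a + c) % T - c) % T = a % T := by
  rw [Int.sub_emod, Int.emod_emod_of_dvd _ dvd_rfl, ← Int.sub_emod, add_sub_cancel_right]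

lemma emod_shift2 (T a c : ℤ) : (a % T + c) % T = (a + c) % T := by
  rw [Int.add_emod, Int.emod_emod_of_dvd _ dvd_rfl, ← Int.add_emod]

variable {V : Type*} [Fintype V] [DecidableEq V]

omit [DecidableEq V] in
lemma OPT_le_cover (G : SimpleGraph V) (w : V → ℝ) (hw : ∀ v, 0 ≤ w v)
    {C : Finset V} (hC : IsVC G C) : OPT G w ≤ ∑ v ∈ C, w v := by
  apply csInf_le
  · exact ⟨0, fun y ⟨D, hD, hy⟩ => hy ▸ Finset.sum_nonneg fun v _ => hw v⟩
  · exact ⟨C, hC, rfl⟩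

/-- The threshold function. -/
noncomputable def tauf {V : Type*} (k : ℕ) (T K : ℤ) (φ : V → ℤ) (v : V) (t : ℤ) : ℝ :=
  ((2*(k:ℝ)+1) * (|T - 2 * ((t + K * φ v) % T)| : ℤ)) / ((2*(k:ℝ)+2) * T)

/-- Core rounding bound. -/
lemma round_bound (G : SimpleGraph V) (k : ℕ) (hk : 1 ≤ k) (φ : V → ℤ)
    (hφ : ∀ ⦃u v⦄, G.Adj u v →
      (φ u - φ v) % (2*(k:ℤ)+1) = 1 ∨ (φ u - φ v) % (2*(k:ℤ)+1) = 2*(k:ℤ))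
    (w : V → ℝ) (hw : ∀ v, 0 ≤ w v)
    (x : V → ℝ) (hx0 : ∀ v, 0 ≤ x v) (hxf : ∀ ⦃u v⦄, G.Adj u v → 1 ≤ x u + x v) :
    OPT G w ≤ (1 + 1/(2*(k:ℝ)+1)) * ∑ v, w v * x v := by
  classical
  set Val : ℝ := ∑ v, w v * x v with hVal
  set Wtot : ℝ := ∑ v, w v with hWtot
  have hWtot0 : 0 ≤ Wtot := Finset.sum_nonneg fun v _ => hw v
  have main : ∀ m : ℕ, 1 ≤ m →
      OPT G w ≤ (1 + 1/(2*(k:ℝ)+1)) * Val + Wtot / ((2*(k:ℝ)+1)*m) := by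
    intro m hm
    set T : ℤ := (2*(k:ℤ)+1) * m with hT
    have hT0 : 0 < T := by positivity
    have hTR0 : (0:ℝ) < (T:ℝ) := by exact_mod_cast hT0
    set K : ℤ := (k:ℤ) * m with hK
    have hTK : T = 2*K + m := by rw [hT, hK]; ring
    have hKm : (m:ℤ) ≤ K := by
      have h1 : (1:ℤ) ≤ (k:ℤ) := by exact_mod_cast hk
      have h2 : (0:ℤ) ≤ (m:ℤ) := Int.ofNat_nonneg m
      nlinarith
    have hdenom : (0:ℝ) < (2*(k:ℝ)+2) * T := by positivity
    -- shift relation along edges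
    have hshift : ∀ ⦃u v⦄, G.Adj u v → ∀ t : ℤ,
        (t + K * φ u) % T = (((t + K * φ v) % T) + K) % T ∨
        (t + K * φ v) % T = (((t + K * φ u) % T) + K) % T := by
      intro u v hadj t
      have hLpos : (0:ℤ) < 2*(k:ℤ)+1 := by positivity
      rcases hφ hadj with hcase | hcase
      · left
        have hed := Int.emod_add_mul_ediv (φ u - φ v) (2*(k:ℤ)+1)
        set z : ℤ := (φ u - φ v) / (2*(k:ℤ)+1) with hzdef
        have hz : φ u - φ v = 1 + (2*(k:ℤ)+1) * z := by omega
        rw [emod_shift2]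
        have harg : t + K * φ u = (t + K * φ v + K) + T * ((k:ℤ)*z) := by
          have h5 : K * φ u = K * φ v + K * (1 + (2*(k:ℤ)+1)*z) := by
            rw [← mul_add]
            congr 1
            omega
          rw [h5, hK, hT]
          ring
        rw [harg, Int.add_mul_emod_self_left]
      · right
        have hneg : (φ v - φ u) % (2*(k:ℤ)+1) = 1 := by
          have := neg_emod_one (2*(k:ℤ)+1) (φ u - φ v) (by omega) (by omega)
          simpa using this
        have hed2 := Int.emod_add_mul_ediv (φ v - φ u) (2*(k:ℤ)+1)
        set z : ℤ := (φ v - φ u) / (2*(k:ℤ)+1) with hzdef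
        have hz : φ v - φ u = 1 + (2*(k:ℤ)+1) * z := by omega
        rw [emod_shift2]
        have harg : t + K * φ v = (t + K * φ u + K) + T * ((k:ℤ)*z) := by
          have h5 : K * φ v = K * φ u + K * (1 + (2*(k:ℤ)+1)*z) := by
            rw [← mul_add]
            congr 1
            omega
          rw [h5, hK, hT]
          ring
        rw [harg, Int.add_mul_emod_self_left]
    -- covers
    have hcover : ∀ t : ℤ, IsVC G (univ.filter (fun v => tauf k T K φ v t ≤ x v)) := by
      intro t u v hadj
      by_contra hcon
      push_neg at hcon
      simp only [Finset.mem_filter, Finset.mem_univ, true_and, not_le] at hcon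
      have hNsum : |T - 2 * ((t + K * φ u) % T)| + |T - 2 * ((t + K * φ v) % T)| ≤ T + m := by
        rcases hshift hadj t with hsh | hsh
        · have := key_int K m T ((t + K * φ v) % T) ((t + K * φ u) % T)
            (by exact_mod_cast hm) hKm hTK (Int.emod_nonneg _ (by omega))
            (Int.emod_lt_of_pos _ hT0) hsh
          omega
        · have := key_int K m T ((t + K * φ u) % T) ((t + K * φ v) % T)
            (by exact_mod_cast hm) hKm hTK (Int.emod_nonneg _ (by omega))
            (Int.emod_lt_of_pos _ hT0) hsh
          omega
      have hτsum : tauf k T K φ u t + tauf k T K φ v t ≤ 1 := by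
        unfold tauf
        rw [← add_div, div_le_one hdenom]
        have hcast : ((|T - 2 * ((t + K * φ u) % T)| : ℤ) : ℝ)
            + ((|T - 2 * ((t + K * φ v) % T)| : ℤ) : ℝ) ≤ (T:ℝ) + m := by
          exact_mod_cast hNsum
        have hTm : (T:ℝ) = (2*(k:ℝ)+1) * m := by rw [hT]; push_cast; ring
        nlinarith
      have h1 := hxf hadj
      nlinarith [hcon.1, hcon.2]
    -- counting
    have hcount : ∀ v : V,
        (((Finset.Ico (0:ℤ) T).filter (fun t => tauf k T K φ v t ≤ x v)).card : ℝ)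
          ≤ (2*(k:ℝ)+2) * T * x v / (2*(k:ℝ)+1) + 1 := by
      intro v
      set B : ℝ := (2*(k:ℝ)+2) * T * x v / (2*(k:ℝ)+1) with hB
      have hB0 : 0 ≤ B := by
        have := hx0 v
        positivity
      set n : ℤ := ⌊B⌋ with hn
      have hn0 : 0 ≤ n := Int.le_floor.mpr (by simpa using hB0)
      have hcard : ((Finset.Ico (0:ℤ) T).filter (fun t => tauf k T K φ v t ≤ x v)).card
          = ((Finset.Ico (0:ℤ) T).filter
              (fun ρ => ((2*(k:ℝ)+1) * ((|T - 2*ρ| : ℤ) : ℝ)) / ((2*(k:ℝ)+2) * T) ≤ x v)).card := by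
        apply Finset.card_nbij' (i := fun t => (t + K * φ v) % T)
          (j := fun ρ => (ρ - K * φ v) % T)
        · intro t ht
          simp only [Finset.mem_coe, Finset.mem_filter, Finset.mem_Ico] at ht ⊢
          refine ⟨⟨Int.emod_nonneg _ (by omega), Int.emod_lt_of_pos _ hT0⟩, ?_⟩
          have h6 := ht.2
          unfold tauf at h6
          exact h6
        · intro ρ hρ
          simp only [Finset.mem_coe, Finset.mem_filter, Finset.mem_Ico] at hρ ⊢
          refine ⟨⟨Int.emod_nonneg _ (by omega), Int.emod_lt_of_pos _ hT0⟩, ?_⟩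
          unfold tauf
          have hRval : ((ρ - K * φ v) % T + K * φ v) % T = ρ := by
            rw [emod_shift2, sub_add_cancel]
            exact Int.emod_eq_of_lt hρ.1.1 hρ.1.2
          rw [hRval]
          exact hρ.2
        · intro t ht
          simp only [Finset.mem_coe, Finset.mem_filter, Finset.mem_Ico] at ht
          dsimp only
          rw [emod_shift1]
          exact Int.emod_eq_of_lt ht.1.1 ht.1.2
        · intro ρ hρ
          simp only [Finset.mem_coe, Finset.mem_filter, Finset.mem_Ico] at hρ
          dsimp only
          rw [emod_shift2, sub_add_cancel]
          exact Int.emod_eq_of_lt hρ.1.1 hρ.1.2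
      rw [hcard]
      have hsub : ((Finset.Ico (0:ℤ) T).filter
            (fun ρ => ((2*(k:ℝ)+1) * ((|T - 2*ρ| : ℤ) : ℝ)) / ((2*(k:ℝ)+2) * T) ≤ x v))
          ⊆ Finset.Icc ((T - n + 1)/2) ((T + n)/2) := by
        intro ρ hρ
        simp only [Finset.mem_filter, Finset.mem_Ico] at hρ
        rcases hρ with ⟨⟨hρ1, hρ2⟩, hρ3⟩
        have habs : ((|T - 2*ρ| : ℤ) : ℝ) ≤ B := by
          rw [div_le_iff₀ hdenom] at hρ3
          rw [hB]
          rw [le_div_iff₀ (by positivity)]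
          nlinarith
        have habs' : |T - 2*ρ| ≤ n := Int.le_floor.mpr habs
        simp only [Finset.mem_Icc]
        rcases abs_cases (T - 2*ρ) with ⟨h1, h1'⟩ | ⟨h1, h1'⟩ <;> omega
      have hcard2 : ((Finset.Ico (0:ℤ) T).filter
            (fun ρ => ((2*(k:ℝ)+1) * ((|T - 2*ρ| : ℤ) : ℝ)) / ((2*(k:ℝ)+2) * T) ≤ x v)).card
          ≤ (n + 1).toNat := by
        refine le_trans (Finset.card_le_card hsub) ?_
        rw [Int.card_Icc]
        apply Int.toNat_le_toNat
        omega
      have : (((n+1).toNat : ℝ)) ≤ B + 1 := by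
        have h1 : ((n:ℝ)) ≤ B := Int.floor_le B
        have h2 : ((n+1).toNat : ℤ) = n + 1 := Int.toNat_of_nonneg (by omega)
        have h3 : (((n+1).toNat : ℤ) : ℝ) = (n:ℝ) + 1 := by rw [h2]; push_cast; ring
        push_cast at h3 ⊢
        rw [h3]
        linarith
      calc (((Finset.Ico (0:ℤ) T).filter _).card : ℝ)
          ≤ ((n+1).toNat : ℝ) := by exact_mod_cast hcard2
        _ ≤ B + 1 := this
    -- sum over all t of cover weights
    have hTm : (T:ℝ) = (2*(k:ℝ)+1) * m := by rw [hT]; push_cast; ring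
    have hsumbound : ∑ t ∈ Finset.Ico (0:ℤ) T,
        (∑ v ∈ univ.filter (fun v => tauf k T K φ v t ≤ x v), w v)
        ≤ (1 + 1/(2*(k:ℝ)+1)) * T * Val + Wtot := by
      have hswap : ∑ t ∈ Finset.Ico (0:ℤ) T,
          (∑ v ∈ univ.filter (fun v => tauf k T K φ v t ≤ x v), w v)
          = ∑ v, (((Finset.Ico (0:ℤ) T).filter (fun t => tauf k T K φ v t ≤ x v)).card : ℝ) * w v := by
        simp_rw [Finset.sum_filter]
        rw [Finset.sum_comm]
        congr 1
        funext v
        rw [← Finset.sum_filter, Finset.sum_const, nsmul_eq_mul]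
      rw [hswap]
      have hterm : ∀ v : V,
          (((Finset.Ico (0:ℤ) T).filter (fun t => tauf k T K φ v t ≤ x v)).card : ℝ) * w v
          ≤ ((2*(k:ℝ)+2) * T * x v / (2*(k:ℝ)+1) + 1) * w v := by
        intro v
        exact mul_le_mul_of_nonneg_right (hcount v) (hw v)
      refine le_trans (Finset.sum_le_sum fun v _ => hterm v) ?_
      have hexp : ∀ v : V, ((2*(k:ℝ)+2) * T * x v / (2*(k:ℝ)+1) + 1) * w v
          = (1 + 1/(2*(k:ℝ)+1)) * T * (w v * x v) + w v := by
        intro v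
        have hk1 : (2*(k:ℝ)+1) ≠ 0 := by positivity
        field_simp
        try ring
      rw [Finset.sum_congr rfl (fun v _ => hexp v), Finset.sum_add_distrib,
        ← Finset.mul_sum]
    -- pick a good t
    have hne : (Finset.Ico (0:ℤ) T).Nonempty := by
      refine ⟨0, ?_⟩
      simp [hT0]
    obtain ⟨t, ht, hle⟩ := Finset.exists_le_of_sum_le hne
      (f := fun t : ℤ => ∑ v ∈ univ.filter (fun v => tauf k T K φ v t ≤ x v), w v)
      (g := fun _ : ℤ => (1 + 1/(2*(k:ℝ)+1)) * Val + Wtot / ((2*(k:ℝ)+1)*m))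
      (by
        rw [Finset.sum_const, nsmul_eq_mul]
        have hcard : ((Finset.Ico (0:ℤ) T).card : ℝ) = (T:ℝ) := by
          rw [Int.card_Ico]
          simp only [sub_zero]
          exact_mod_cast congrArg Int.cast (Int.toNat_of_nonneg hT0.le)
        rw [hcard]
        have hWT : (T:ℝ) * ((1 + 1/(2*(k:ℝ)+1)) * Val + Wtot / ((2*(k:ℝ)+1)*m))
            = (1 + 1/(2*(k:ℝ)+1)) * T * Val + Wtot := by
          rw [hTm]
          have : (2*(k:ℝ)+1) * m ≠ 0 := by positivity
          field_simp
        rw [hWT]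
        exact hsumbound)
    exact le_trans (OPT_le_cover G w hw (hcover t)) hle
  -- take m → ∞
  have hfin : ∀ η : ℝ, 0 < η → OPT G w ≤ (1 + 1/(2*(k:ℝ)+1)) * Val + η := by
    intro η hη
    obtain ⟨n, hn⟩ := exists_nat_gt (Wtot / η)
    have hm1 : 1 ≤ n + 1 := by omega
    refine le_trans (main (n+1) hm1) ?_
    have hnn : (0:ℝ) < ((n:ℝ)+1) := by positivity
    have h2 : Wtot / ((2*(k:ℝ)+1) * ((n:ℕ)+1:ℕ)) ≤ η := by
      push_cast
      rw [div_le_iff₀ (by positivity)]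
      have h3 : Wtot / η < (n:ℝ) + 1 := lt_of_lt_of_le hn (by linarith)
      have h4 : Wtot < η * ((n:ℝ)+1) := by
        rw [div_lt_iff₀ hη] at h3
        linarith
      have h5 : (1:ℝ) * ((n:ℝ)+1) ≤ (2*(k:ℝ)+1) * ((n:ℝ)+1) := by
        apply mul_le_mul_of_nonneg_right _ (by positivity)
        have : (1:ℝ) ≤ (k:ℝ) := by exact_mod_cast hk
        linarith
      nlinarith [hη.le]
    linarith
  exact le_of_forall_pos_le_add hfin


end Round
end IGaux


namespace IGaux
lemma diff_emod (k : ℕ) (hk : 1 ≤ k) (d : ℤ)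
    (h : d = 1 ∨ d = -1 ∨ d = 2*(k:ℤ) ∨ d = -(2*(k:ℤ))) :
    d % (2*(k:ℤ)+1) = 1 ∨ d % (2*(k:ℤ)+1) = 2*(k:ℤ) := by
  have hk' : (1:ℤ) ≤ (k:ℤ) := by exact_mod_cast hk
  rcases h with rfl | rfl | rfl | rfl
  · left; exact Int.emod_eq_of_lt (by omega) (by omega)
  · right
    rw [show (-1:ℤ) = 2*(k:ℤ) + (2*(k:ℤ)+1)*(-1) by ring, Int.add_mul_emod_self_left]
    exact Int.emod_eq_of_lt (by omega) (by omega)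
  · right; exact Int.emod_eq_of_lt (by omega) (by omega)
  · left
    rw [show -(2*(k:ℤ)) = 1 + (2*(k:ℤ)+1)*(-1) by ring, Int.add_mul_emod_self_left]
    exact Int.emod_eq_of_lt (by omega) (by omega)

lemma hom_exists {V : Type*} [DecidableEq V]
    (G : SimpleGraph V) (Vc : Fin 3 → Finset V)
    (hcover : ∀ v : V, ∃! i : Fin 3, v ∈ Vc i)
    (hind : ∀ i, IsIndep G (Vc i))
    (i : Fin 3) (k : ℕ) (hk : 1 ≤ k)
    (hOG : HasOddGirth (contract G ↑(Vc i)) (2*k+1)) :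
    ∃ φ : V → ℤ, ∀ ⦃u v⦄, G.Adj u v →
      (φ u - φ v) % (2*(k:ℤ)+1) = 1 ∨ (φ u - φ v) % (2*(k:ℤ)+1) = 2*(k:ℤ) := by
  classical
  set S : Set V := ↑(Vc i) with hS
  set H := contract G S with hH
  have hadj_ss : ∀ {u v : V} (hu : u ∉ S) (hv : v ∉ S), G.Adj u v →
      H.Adj (some ⟨u, hu⟩) (some ⟨v, hv⟩) := by
    intro u v hu hv hadj
    rw [hH]
    unfold contract
    rw [SimpleGraph.fromRel_adj]
    refine ⟨by simp [Subtype.ext_iff, hadj.ne], Or.inl ?_⟩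
    exact hadj
  have hadj_sn : ∀ {u v : V} (hv : v ∉ S), u ∈ S → G.Adj u v →
      H.Adj none (some ⟨v, hv⟩) := by
    intro u v hv hu hadj
    rw [hH]; unfold contract; rw [SimpleGraph.fromRel_adj]
    exact ⟨by simp, Or.inr ⟨u, hu, hadj.symm⟩⟩
  -- color classes
  have h3' : ∀ a j : Fin 3, j = a ∨ j = a + 1 ∨ j = a + 2 := by decide
  have h3 : ∀ j : Fin 3, j = i ∨ j = i + 1 ∨ j = i + 2 := h3' i
  have hclass : ∀ v : V, v ∉ S → (v ∈ Vc (i+1) ∨ v ∈ Vc (i+2)) := by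
    intro v hv
    obtain ⟨j, hj, _⟩ := hcover v
    rcases h3 j with rfl | rfl | rfl
    · exact absurd (Finset.mem_coe.mpr hj) hv
    · exact Or.inl hj
    · exact Or.inr hj
  set σ : V → ℤ := fun v => if v ∈ Vc (i+1) then 0 else 1 with hσ
  have hσdiff : ∀ {u v : V}, u ∉ S → v ∉ S → G.Adj u v →
      (σ u = 0 ∧ σ v = 1) ∨ (σ u = 1 ∧ σ v = 0) := by
    intro u v hu hv hadj
    by_cases h1 : u ∈ Vc (i+1) <;> by_cases h2 : v ∈ Vc (i+1)
    · exact absurd hadj (hind (i+1) h1 h2)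
    · left; simp [hσ, h1, h2]
    · right; simp [hσ, h1, h2]
    · exfalso
      have hu2 : u ∈ Vc (i+2) := (hclass u hu).resolve_left h1
      have hv2 : v ∈ Vc (i+2) := (hclass v hv).resolve_left h2
      exact absurd hadj (hind (i+2) hu2 hv2)
  -- distances
  set mm : V → ℕ := fun v =>
    if h : v ∈ S then 0
    else (if H.Reachable none (some ⟨v, h⟩) then min (H.dist none (some ⟨v, h⟩)) k else k)
    with hmm
  set φ : V → ℤ := fun v => if h : v ∈ S then 0 else pos k (σ v) (mm v) with hφ
  refine ⟨φ, ?_⟩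
  intro u v hadj
  have hne : (2:ℤ)*(k:ℤ)+1 ≠ 0 := by positivity
  by_cases hu : u ∈ S <;> by_cases hv : v ∈ S
  · exact absurd hadj (hind i (Finset.mem_coe.mp hu) (Finset.mem_coe.mp hv))
  · -- u ∈ S, v ∉ S
    have hA : H.Adj none (some ⟨v, hv⟩) := hadj_sn hv hu hadj
    have hd1 : H.dist none (some ⟨v, hv⟩) = 1 := by
      apply le_antisymm
      · exact le_trans (SimpleGraph.dist_le (SimpleGraph.Walk.cons hA SimpleGraph.Walk.nil)) (by simp)
      · exact SimpleGraph.Reachable.pos_dist_of_ne hA.reachable (by simp)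
    have hmmv : mm v = 1 := by
      rw [hmm]
      simp only [dif_neg hv, if_pos hA.reachable, hd1]
      omega
    have hφu : φ u = 0 := by rw [hφ]; simp [hu]
    have hφv : φ v = pos k (σ v) 1 := by rw [hφ]; simp only [dif_neg hv]; rw [hmmv]
    apply diff_emod k hk
    rw [hφu, hφv]
    rcases pos_one k (σ v) with h | h <;> rw [h] <;> simp
  · -- v ∈ S, u ∉ S
    have hA : H.Adj none (some ⟨u, hu⟩) := hadj_sn hu hv hadj.symm
    have hd1 : H.dist none (some ⟨u, hu⟩) = 1 := by
      apply le_antisymm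
      · exact le_trans (SimpleGraph.dist_le (SimpleGraph.Walk.cons hA SimpleGraph.Walk.nil)) (by simp)
      · exact SimpleGraph.Reachable.pos_dist_of_ne hA.reachable (by simp)
    have hmmu : mm u = 1 := by
      rw [hmm]
      simp only [dif_neg hu, if_pos hA.reachable, hd1]
      omega
    have hφv : φ v = 0 := by rw [hφ]; simp [hv]
    have hφu : φ u = pos k (σ u) 1 := by rw [hφ]; simp only [dif_neg hu]; rw [hmmu]
    apply diff_emod k hk
    rw [hφu, hφv]
    rcases pos_one k (σ u) with h | h <;> rw [h] <;> simp
  · -- both outside S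
    have hxy : H.Adj (some ⟨u, hu⟩) (some ⟨v, hv⟩) := hadj_ss hu hv hadj
    have hmmu1 : 1 ≤ mm u := by
      rw [hmm]; simp only [dif_neg hu]
      split_ifs with hr
      · have := SimpleGraph.Reachable.pos_dist_of_ne hr (by simp)
        omega
      · omega
    have hmmv1 : 1 ≤ mm v := by
      rw [hmm]; simp only [dif_neg hv]
      split_ifs with hr
      · have := SimpleGraph.Reachable.pos_dist_of_ne hr (by simp)
        omega
      · omega
    have hφu : φ u = pos k (σ u) (mm u) := by rw [hφ]; simp only [dif_neg hu]
    have hφv : φ v = pos k (σ v) (mm v) := by rw [hφ]; simp only [dif_neg hv]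
    have hcase : (mm u = k ∧ mm v = k) ∨ (mm v = mm u + 1 ∧ mm v ≤ k)
        ∨ (mm u = mm v + 1 ∧ mm u ≤ k) := by
      by_cases hr : H.Reachable none (some ⟨u, hu⟩)
      · have hrv : H.Reachable none (some ⟨v, hv⟩) := hr.trans hxy.reachable
        have hdu1 : 1 ≤ H.dist none (some ⟨u, hu⟩) :=
          SimpleGraph.Reachable.pos_dist_of_ne hr (by simp)
        have hdv1 : 1 ≤ H.dist none (some ⟨v, hv⟩) :=
          SimpleGraph.Reachable.pos_dist_of_ne hrv (by simp)
        have htri1 : H.dist none (some ⟨v, hv⟩) ≤ H.dist none (some ⟨u, hu⟩) + 1 := by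
          obtain ⟨p, hp⟩ := hr.exists_walk_length_eq_dist
          refine le_trans (SimpleGraph.dist_le
            (p.append (SimpleGraph.Walk.cons hxy SimpleGraph.Walk.nil))) ?_
          rw [SimpleGraph.Walk.length_append]
          simp [hp]
        have htri2 : H.dist none (some ⟨u, hu⟩) ≤ H.dist none (some ⟨v, hv⟩) + 1 := by
          obtain ⟨p, hp⟩ := hrv.exists_walk_length_eq_dist
          refine le_trans (SimpleGraph.dist_le
            (p.append (SimpleGraph.Walk.cons hxy.symm SimpleGraph.Walk.nil))) ?_
          rw [SimpleGraph.Walk.length_append]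
          simp [hp]
        have hmmu : mm u = min (H.dist none (some ⟨u, hu⟩)) k := by
          rw [hmm]; simp only [dif_neg hu, if_pos hr]
        have hmmv : mm v = min (H.dist none (some ⟨v, hv⟩)) k := by
          rw [hmm]; simp only [dif_neg hv, if_pos hrv]
        -- no equal-distance edges below level k
        have hecontra : ¬ (H.dist none (some ⟨u, hu⟩) = H.dist none (some ⟨v, hv⟩)
            ∧ H.dist none (some ⟨u, hu⟩) ≤ k - 1) := by
          rintro ⟨heq, hle⟩
          obtain ⟨p, hp⟩ := hr.exists_walk_length_eq_dist
          obtain ⟨q, hq⟩ := hrv.exists_walk_length_eq_dist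
          set W := p.append (SimpleGraph.Walk.cons hxy q.reverse) with hW
          have hWlen : W.length = 2 * H.dist none (some ⟨u, hu⟩) + 1 := by
            rw [hW, SimpleGraph.Walk.length_append, SimpleGraph.Walk.length_cons,
              SimpleGraph.Walk.length_reverse, hp, hq, ← heq]
            ring
          obtain ⟨b, cyc, hcyc, hcodd, hclen⟩ := odd_closed_walk_cycle W.length W rfl
            (by rw [hWlen]; exact ⟨_, rfl⟩)
          have := hOG.2.2 b cyc hcyc hcodd
          omega
        by_cases hdeq : H.dist none (some ⟨u, hu⟩) = H.dist none (some ⟨v, hv⟩)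
        · have hge : k ≤ H.dist none (some ⟨u, hu⟩) := by
            by_contra hcon
            exact hecontra ⟨hdeq, by omega⟩
          left
          constructor <;> omega
        · have : H.dist none (some ⟨v, hv⟩) = H.dist none (some ⟨u, hu⟩) + 1
              ∨ H.dist none (some ⟨u, hu⟩) = H.dist none (some ⟨v, hv⟩) + 1 := by omega
          rcases this with hd | hd
          · by_cases hle : H.dist none (some ⟨v, hv⟩) ≤ k
            · right; left
              constructor <;> omega
            · left; constructor <;> omega
          · by_cases hle : H.dist none (some ⟨u, hu⟩) ≤ k
            · right; right
              constructor <;> omega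
            · left; constructor <;> omega
      · have hrv : ¬ H.Reachable none (some ⟨v, hv⟩) := by
          intro hc
          exact hr (hc.trans hxy.symm.reachable)
        left
        rw [hmm]
        simp only [dif_neg hu, dif_neg hv, if_neg hr, if_neg hrv]
        simp
    rw [hφu, hφv]
    exact diff_emod k hk _ (pure_pos k hk (σ u) (σ v) (hσdiff hu hv hadj) (mm u) (mm v)
      hmmu1 hmmv1 hcase)


lemma quot_cycle_bound {V : Type*} (G : SimpleGraph V) (S : Set V)
    (hindS : ∀ ⦃u⦄, u ∈ S → ∀ ⦃v⦄, v ∈ S → ¬ G.Adj u v)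
    {a : V} (c : G.Walk a a) (hodd : Odd c.length) :
    ∃ (b : Option {v : V // v ∉ S}) (p : (contract G S).Walk b b),
      p.IsCycle ∧ Odd p.length ∧ p.length ≤ c.length := by
  classical
  have f : G →g contract G S := by
    refine ⟨fun v => if h : v ∈ S then none else some ⟨v, h⟩, ?_⟩
    intro u v hadj
    by_cases hu : u ∈ S <;> by_cases hv : v ∈ S <;>
      simp only [dif_pos, dif_neg, hu, hv, dite_eq_ite, if_pos, if_neg]
    · exact absurd hadj (hindS hu hv)
    · unfold contract
      rw [SimpleGraph.fromRel_adj]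
      exact ⟨by simp, Or.inr ⟨u, hu, hadj.symm⟩⟩
    · unfold contract
      rw [SimpleGraph.fromRel_adj]
      exact ⟨by simp, Or.inl ⟨v, hv, hadj⟩⟩
    · unfold contract
      rw [SimpleGraph.fromRel_adj]
      refine ⟨by simp [Subtype.ext_iff, hadj.ne], Or.inl hadj⟩
  rw [show c.length = (c.map f).length from (SimpleGraph.Walk.length_map f c).symm] at hodd ⊢
  exact odd_closed_walk_cycle (c.map f).length (c.map f) rfl hodd

/-- E2: a cycle in the contraction of a singleton class gives a cycle in `G`. -/
lemma singleton_cycle {V : Type*} (G : SimpleGraph V) (S : Set V) (u0 : V) (hS : S = {u0})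
    {b : Option {v : V // v ∉ S}}
    (cH : (contract G S).Walk b b) (hcyc : cH.IsCycle) :
    ∃ (a : V) (c : G.Walk a a), c.IsCycle ∧ c.length = cH.length := by
  classical
  subst hS
  have hynot : ∀ y : {v : V // v ∉ ({u0} : Set V)}, y.1 ≠ u0 := by
    intro y
    have := y.2
    simpa using this
  have hmaprel : ∀ {x y : Option {v : V // v ∉ ({u0} : Set V)}},
      (contract G ({u0} : Set V)).Adj x y →
      G.Adj (match x with | none => u0 | some y => y.1)
        (match y with | none => u0 | some y => y.1) := by
    intro x y hadj
    unfold contract at hadj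
    rw [SimpleGraph.fromRel_adj] at hadj
    obtain ⟨hne, hrel⟩ := hadj
    match x, y with
    | none, none => exact absurd rfl hne
    | some x', none =>
      rcases hrel with h | h
      · obtain ⟨s, hs, hadj⟩ := h
        have : s = u0 := by simpa using hs
        exact this ▸ hadj
      · exact absurd h (by simp)
    | none, some y' =>
      rcases hrel with h | h
      · exact absurd h (by simp)
      · obtain ⟨s, hs, hadj⟩ := h
        have : s = u0 := by simpa using hs
        exact (this ▸ hadj).symm
    | some x', some y' =>
      rcases hrel with h | h
      · exact h
      · exact h.symm
  have hinj : Function.Injective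
      (fun x : Option {v : V // v ∉ ({u0} : Set V)} =>
        match x with | none => u0 | some y => y.1) := by
    intro x y hxy
    match x, y with
    | none, none => rfl
    | some x', none =>
      exact absurd (show x'.1 = u0 from hxy) (hynot x')
    | none, some y' =>
      exact absurd (show y'.1 = u0 from hxy.symm) (hynot y')
    | some x', some y' =>
      exact congrArg some (Subtype.ext (show x'.1 = y'.1 from hxy))
  set ψ : contract G ({u0} : Set V) →g G :=
    ⟨fun x => match x with | none => u0 | some y => y.1, hmaprel⟩ with hψ
  refine ⟨ψ b, cH.map ψ, ?_, SimpleGraph.Walk.length_map _ _⟩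
  exact hcyc.map hinj

lemma cycle_support_card {V : Type*} [DecidableEq V] {H : SimpleGraph V}
    {a : V} (c : H.Walk a a) (hc : c.IsCycle) :
    c.support.toFinset.card = c.length := by
  cases c with
  | nil => simp at hc
  | @cons _ b _ h rest =>
    have hnd : rest.support.Nodup := by
      have := hc.support_nodup
      simpa using this
    have hmem : a ∈ rest.support := rest.end_mem_support
    have : (SimpleGraph.Walk.cons h rest).support.toFinset = rest.support.toFinset := by
      simp only [SimpleGraph.Walk.support_cons, List.toFinset_cons]
      exact Finset.insert_eq_self.mpr (List.mem_toFinset.mpr hmem)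
    rw [this, List.toFinset_card_of_nodup hnd, SimpleGraph.Walk.length_support]
    simp


end IGaux

/-- for a non-bipartite 3-colorable graph with color classes `V₁,V₂,V₃`
whose contractions `G/Vᵢ` have odd girths `2ρᵢ-1`, the integrality gap is at most
`1 + minᵢ 1/(2ρᵢ-1)`, with equality if some color class is a singleton. -/
theorem integrality_gap_three_colorable {V : Type*} [Fintype V] [DecidableEq V]
    (G : SimpleGraph V) (hnb : ¬ G.Colorable 2)
    (Vc : Fin 3 → Finset V)
    (hcover : ∀ v : V, ∃! i : Fin 3, v ∈ Vc i)
    (hind : ∀ i, IsIndep G (Vc i))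
    (ρ : Fin 3 → ℕ)
    (hring : ∀ i : Fin 3, ¬ (contract G ↑(Vc i)).Colorable 2 ∧ 2 ≤ ρ i ∧
      HasOddGirth (contract G ↑(Vc i)) (2 * ρ i - 1)) :
    (∀ w : V → ℝ, (∀ v, 0 ≤ w v) →
        OPT G w ≤ (1 + min (1 / (2 * (ρ 0 : ℝ) - 1))
            (min (1 / (2 * (ρ 1 : ℝ) - 1)) (1 / (2 * (ρ 2 : ℝ) - 1)))) * LPval G w) ∧
      ((∃ i : Fin 3, (Vc i).card = 1) →
        IG G = 1 + min (1 / (2 * (ρ 0 : ℝ) - 1))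
            (min (1 / (2 * (ρ 1 : ℝ) - 1)) (1 / (2 * (ρ 2 : ℝ) - 1)))) := by
  classical
  have hρ2 : ∀ i, 2 ≤ ρ i := fun i => (hring i).2.1
  have hk1 : ∀ i, 1 ≤ ρ i - 1 := fun i => by have := hρ2 i; omega
  have hOG : ∀ i, HasOddGirth (contract G ↑(Vc i)) (2*(ρ i - 1)+1) := by
    intro i
    have h := (hring i).2.2
    have heq : 2*(ρ i - 1)+1 = 2 * ρ i - 1 := by have := hρ2 i; omega
    rwa [heq]
  have hindI : ∀ i : Fin 3, ∀ ⦃u⦄, u ∈ Vc i → ∀ ⦃v⦄, v ∈ Vc i → ¬ G.Adj u v :=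
    fun i => hind i
  have hcastρ : ∀ i : Fin 3, (2*((ρ i : ℝ)) - 1) = 2*(((ρ i - 1 : ℕ)):ℝ)+1 := by
    intro i
    rw [Nat.cast_sub (by have := hρ2 i; omega : 1 ≤ ρ i)]
    push_cast
    ring
  have hρpos : ∀ i : Fin 3, (0:ℝ) < 2*((ρ i : ℝ)) - 1 := by
    intro i
    have : (2:ℝ) ≤ (ρ i : ℝ) := by exact_mod_cast hρ2 i
    linarith
  -- LP set basics
  have hLPne : ∀ w : V → ℝ, ∃ t, t ∈ {t : ℝ | ∃ x : V → ℝ, (∀ v, 0 ≤ x v) ∧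
      (∀ ⦃u v : V⦄, G.Adj u v → 1 ≤ x u + x v) ∧ t = ∑ v, w v * x v} := by
    intro w
    exact ⟨∑ v, w v * 1, fun _ => 1, fun v => zero_le_one, fun u v _ => by norm_num, rfl⟩
  have hLPbdd : ∀ w : V → ℝ, (∀ v, 0 ≤ w v) → ∀ t ∈ {t : ℝ | ∃ x : V → ℝ, (∀ v, 0 ≤ x v) ∧
      (∀ ⦃u v : V⦄, G.Adj u v → 1 ≤ x u + x v) ∧ t = ∑ v, w v * x v}, (0:ℝ) ≤ t := by
    rintro w hw t ⟨x, hx0, _, rfl⟩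
    exact Finset.sum_nonneg fun v _ => mul_nonneg (hw v) (hx0 v)
  -- the per-colour-class bound
  have hLP : ∀ (w : V → ℝ), (∀ v, 0 ≤ w v) → ∀ i : Fin 3,
      OPT G w ≤ (1 + 1/(2*((ρ i : ℝ)) - 1)) * LPval G w := by
    intro w hw i
    obtain ⟨φ, hφ⟩ := IGaux.hom_exists G Vc hcover hind i (ρ i - 1) (hk1 i) (hOG i)
    set k : ℕ := ρ i - 1 with hkdef
    have hpos : (0:ℝ) < 1 + 1/(2*(k:ℝ)+1) := by positivity
    have hmain : ∀ t ∈ {t : ℝ | ∃ x : V → ℝ, (∀ v, 0 ≤ x v) ∧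
        (∀ ⦃u v : V⦄, G.Adj u v → 1 ≤ x u + x v) ∧ t = ∑ v, w v * x v},
        OPT G w / (1 + 1/(2*(k:ℝ)+1)) ≤ t := by
      rintro t ⟨x, hx0, hxf, rfl⟩
      rw [div_le_iff₀ hpos]
      rw [mul_comm]
      exact IGaux.round_bound G k (hk1 i) φ hφ w hw x hx0 hxf
    have hle : OPT G w / (1 + 1/(2*(k:ℝ)+1)) ≤ LPval G w := by
      apply le_csInf
      · exact hLPne w
      · exact hmain
    rw [div_le_iff₀ hpos] at hle
    rw [hcastρ i]
    rw [mul_comm] at hle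
    exact hle
  have hminchoice : ∀ a b c : ℝ, min a (min b c) = a ∨ min a (min b c) = b ∨
      min a (min b c) = c := by
    intro a b c
    rcases min_cases a (min b c) with ⟨h, _⟩ | ⟨h, _⟩
    · exact Or.inl h
    · rcases min_cases b c with ⟨h2, _⟩ | ⟨h2, _⟩
      · exact Or.inr (Or.inl (h.trans h2))
      · exact Or.inr (Or.inr (h.trans h2))
  have part1 : ∀ w : V → ℝ, (∀ v, 0 ≤ w v) →
      OPT G w ≤ (1 + min (1 / (2 * (ρ 0 : ℝ) - 1))
        (min (1 / (2 * (ρ 1 : ℝ) - 1)) (1 / (2 * (ρ 2 : ℝ) - 1)))) * LPval G w := by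
    intro w hw
    rcases hminchoice (1 / (2 * (ρ 0 : ℝ) - 1)) (1 / (2 * (ρ 1 : ℝ) - 1))
        (1 / (2 * (ρ 2 : ℝ) - 1)) with h | h | h <;> rw [h]
    · exact hLP w hw 0
    · exact hLP w hw 1
    · exact hLP w hw 2
  refine ⟨part1, ?_⟩
  rintro ⟨i0, hc1⟩
  obtain ⟨u0, hu0⟩ := Finset.card_eq_one.mp hc1
  have hSet : (↑(Vc i0) : Set V) = ({u0} : Set V) := by rw [hu0]; simp
  obtain ⟨b, cH, hcyc, hclen⟩ := (hOG i0).2.1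
  obtain ⟨a, cG, hcycG, hlenG⟩ := IGaux.singleton_cycle G (↑(Vc i0)) u0 hSet cH hcyc
  set n0 : ℕ := 2*(ρ i0 - 1)+1 with hn0def
  have hlenG' : cG.length = n0 := by rw [hlenG, hclen]
  have hoddn0 : Odd n0 := ⟨ρ i0 - 1, by omega⟩
  have hn3 : 3 ≤ n0 := by have := hρ2 i0; omega
  have hn0R : (0:ℝ) < (n0:ℝ) := by exact_mod_cast (by omega : 0 < n0)
  -- maximality of ρ i0
  have hmax : ∀ j : Fin 3, 2*(ρ j - 1)+1 ≤ n0 := by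
    intro j
    obtain ⟨b', p, hp, hpodd, hple⟩ := IGaux.quot_cycle_bound G (↑(Vc j))
      (fun u hu v hv => hind j (Finset.mem_coe.mp hu) (Finset.mem_coe.mp hv))
      cG (by rw [hlenG']; exact hoddn0)
    have hmin := (hOG j).2.2 b' p hp hpodd
    omega
  have hρcast : (2*((ρ i0 : ℝ)) - 1) = (n0:ℝ) := by
    rw [hcastρ i0, hn0def]
    push_cast
    ring
  -- value of the min
  have hminval : min (1 / (2 * (ρ 0 : ℝ) - 1))
      (min (1 / (2 * (ρ 1 : ℝ) - 1)) (1 / (2 * (ρ 2 : ℝ) - 1))) = 1/(n0:ℝ) := by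
    have hub : ∀ j : Fin 3, 1/(n0:ℝ) ≤ 1 / (2 * (ρ j : ℝ) - 1) := by
      intro j
      apply one_div_le_one_div_of_le (hρpos j)
      rw [hcastρ j]
      exact_mod_cast hmax j
    have h3 : ∀ z : Fin 3, z = 0 ∨ z = 1 ∨ z = 2 := by decide
    apply le_antisymm
    · rcases h3 i0 with h | h | h
      · rw [← hρcast, ← h]
        exact min_le_left _ _
      · rw [← hρcast, ← h]
        exact le_trans (min_le_right _ _) (min_le_left _ _)
      · rw [← hρcast, ← h]
        exact le_trans (min_le_right _ _) (min_le_right _ _)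
    · exact le_min (hub 0) (le_min (hub 1) (hub 2))
  -- the tight weight function
  set w0 : V → ℝ := fun v => if v ∈ cG.support then 1 else 0 with hw0def
  have hw0 : ∀ v, 0 ≤ w0 v := by
    intro v
    rw [hw0def]
    dsimp only
    split <;> norm_num
  have hsuppcard : cG.support.toFinset.card = n0 := by
    rw [IGaux.cycle_support_card cG hcycG, hlenG']
  -- lower bound on OPT
  have hOPTlb : ((n0:ℝ)+1)/2 ≤ OPT G w0 := by
    apply le_csInf
    · exact ⟨∑ v ∈ Finset.univ, w0 v, Finset.univ, fun u v _ => Or.inl (Finset.mem_univ u), rfl⟩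
    · rintro t ⟨C, hC, rfl⟩
      have hcount := IGaux.cycle_cover_card cG hcycG hC
      have hsum : ∑ v ∈ C, w0 v = ((C ∩ cG.support.toFinset).card : ℝ) := by
        rw [hw0def]
        rw [Finset.sum_boole]
        congr 2
        ext v
        simp [List.mem_toFinset]
      rw [hsum]
      have hln : n0 ≤ 2 * (C ∩ cG.support.toFinset).card := by rw [← hlenG']; exact hcount
      have hodd' := Nat.odd_iff.mp hoddn0
      have : n0 + 1 ≤ 2 * (C ∩ cG.support.toFinset).card := by omega
      have hcast : ((n0:ℝ)+1) ≤ 2 * ((C ∩ cG.support.toFinset).card : ℝ) := by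
        exact_mod_cast this
      linarith
  -- upper bound on LP
  have hLPub : LPval G w0 ≤ (n0:ℝ)/2 := by
    apply csInf_le
    · exact ⟨0, hLPbdd w0 hw0⟩
    · refine ⟨fun v => if v ∈ cG.support then 1/2 else 1, ?_, ?_, ?_⟩
      · intro v
        dsimp only
        split <;> norm_num
      · intro u v _
        dsimp only
        split_ifs <;> norm_num
      · have hterm : ∀ v : V, w0 v * (fun v => if v ∈ cG.support then (1:ℝ)/2 else 1) v
            = if v ∈ cG.support then (1:ℝ)/2 else 0 := by
          intro v
          rw [hw0def]
          dsimp only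
          split <;> norm_num
        rw [Finset.sum_congr rfl (fun v _ => hterm v)]
        rw [Finset.sum_ite, Finset.sum_const, Finset.sum_const]
        have hfilt : Finset.filter (fun v => v ∈ cG.support) Finset.univ
            = cG.support.toFinset := by
          ext v
          simp [List.mem_toFinset]
        rw [hfilt, hsuppcard]
        simp only [smul_zero, add_zero, nsmul_eq_mul]
        ring
  -- combine with part 1
  have hpart1w0 := part1 w0 hw0
  rw [hminval] at hpart1w0
  have hfactor : (1 + 1/(n0:ℝ)) * ((n0:ℝ)/2) = ((n0:ℝ)+1)/2 := by
    field_simp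
  have hLPpos : (0:ℝ) < LPval G w0 := by
    nlinarith [hOPTlb, hpart1w0, hn0R]
  have hOPTub : OPT G w0 ≤ ((n0:ℝ)+1)/2 := by
    calc OPT G w0 ≤ (1 + 1/(n0:ℝ)) * LPval G w0 := hpart1w0
      _ ≤ (1 + 1/(n0:ℝ)) * ((n0:ℝ)/2) := by
          apply mul_le_mul_of_nonneg_left hLPub (by positivity)
      _ = ((n0:ℝ)+1)/2 := hfactor
  have hOPTeq : OPT G w0 = ((n0:ℝ)+1)/2 := le_antisymm hOPTub hOPTlb
  have hLPeq : LPval G w0 = (n0:ℝ)/2 := by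
    apply le_antisymm hLPub
    nlinarith [hpart1w0, hOPTlb, hn0R, hLPub]
  have hratio : OPT G w0 / LPval G w0 = 1 + 1/(n0:ℝ) := by
    rw [hOPTeq, hLPeq]
    have hn0ne : (n0:ℝ) ≠ 0 := by positivity
    field_simp
  -- compute the supremum
  rw [hminval]
  set M : ℝ := 1 + 1/(n0:ℝ) with hM
  have hmem : M ∈ {t : ℝ | ∃ w : V → ℝ, (∀ v, 0 ≤ w v) ∧ 0 < LPval G w ∧
      t = OPT G w / LPval G w} := ⟨w0, hw0, hLPpos, hratio.symm⟩
  have hbound : ∀ t ∈ {t : ℝ | ∃ w : V → ℝ, (∀ v, 0 ≤ w v) ∧ 0 < LPval G w ∧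
      t = OPT G w / LPval G w}, t ≤ M := by
    rintro t ⟨w', hw', hLP', rfl⟩
    rw [div_le_iff₀ hLP']
    have := part1 w' hw'
    rw [hminval] at this
    exact this
  exact le_antisymm (csSup_le ⟨M, hmem⟩ hbound) (le_csSup ⟨M, hbound⟩ hmem)
end
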